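/- arXiv:1201.0533 — 3 statements merged into one kernel-verified Lean document; each statement's English description precedes it below -/
import Mathlib

section
/- Let {X_k, F_k}_{k≥0} be a discrete-time real-valued conditionally symmetric martingale. Assume that for some fixed numbers d, σ > 0, almost surely |X_k − X_{k−1}| ≤ d and E[(X_k − X_{k−1})² | F_{k−1}] ≤ σ² for every k ≥ 1. Set γ = σ²/d² and δ = α/d. Then for every α ≥ 0 with δ ∈ [0,1) and every n ≥ 1, P( max_{1≤k≤n} |X_k − X_0| ≥ αn ) ≤ 2 exp(−n E(γ,δ)). -/
open MeasureTheory ProbabilityTheory Filter Set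

section AuxLemmas
open Real

lemma convexOn_sinh' : ConvexOn ℝ (Set.Ici (0:ℝ)) Real.sinh := by
  apply convexOn_of_deriv2_nonneg (convex_Ici 0) Real.continuous_sinh.continuousOn
    Real.differentiable_sinh.differentiableOn
  · rw [Real.deriv_sinh]; exact Real.differentiable_cosh.differentiableOn
  · intro x hx
    rw [interior_Ici, Set.mem_Ioi] at hx
    have h2 : deriv^[2] Real.sinh = Real.sinh := by
      ext y
      rw [show (2:ℕ) = 1 + 1 from rfl, Function.iterate_add_apply]
      simp [Real.deriv_sinh, Real.deriv_cosh]
    rw [h2]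
    exact Real.sinh_nonneg_iff.2 hx.le

lemma sinh_mul_le {a b : ℝ} (ha : 0 ≤ a) (hab : a ≤ b) : b * Real.sinh a ≤ a * Real.sinh b := by
  rcases eq_or_lt_of_le (ha.trans hab) with hb | hb
  · have ha0 : a = 0 := le_antisymm (hab.trans hb.symm.le) ha
    simp [ha0, ← hb]
  have h := convexOn_sinh'.2 (Set.self_mem_Ici) (Set.mem_Ici.2 (ha.trans hab))
    (show (0:ℝ) ≤ 1 - a/b by rw [sub_nonneg]; exact div_le_one_of_le₀ hab hb.le)
    (show (0:ℝ) ≤ a/b by positivity) (by ring)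
  rw [smul_eq_mul, smul_eq_mul, smul_eq_mul, smul_eq_mul, Real.sinh_zero] at h
  have h2 : Real.sinh a ≤ a / b * Real.sinh b := by
    have heq : (1 - a/b) * 0 + a/b * b = a := by field_simp; ring
    rw [heq] at h; linarith
  calc b * Real.sinh a ≤ b * (a/b * Real.sinh b) := mul_le_mul_of_nonneg_left h2 hb.le
    _ = a * Real.sinh b := by field_simp

lemma cosh_sub_one_eq (y : ℝ) : Real.cosh y - 1 = 2 * Real.sinh (y/2) ^ 2 := by
  have h1 := Real.cosh_two_mul (y/2)
  rw [show 2 * (y/2) = y by ring] at h1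
  have h2 := Real.cosh_sq (y/2)
  nlinarith

lemma cosh_ratio {a b : ℝ} (ha : 0 ≤ a) (hab : a ≤ b) :
    b ^ 2 * (Real.cosh a - 1) ≤ a ^ 2 * (Real.cosh b - 1) := by
  have key := sinh_mul_le (by linarith : (0:ℝ) ≤ a/2) (by linarith : a/2 ≤ b/2)
  have hsa : 0 ≤ Real.sinh (a/2) := Real.sinh_nonneg_iff.2 (by linarith)
  have hb : 0 ≤ b := ha.trans hab
  have hlhs : 0 ≤ b/2 * Real.sinh (a/2) := mul_nonneg (by linarith) hsa
  have hsq : (b/2 * Real.sinh (a/2))^2 ≤ (a/2 * Real.sinh (b/2))^2 :=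
    pow_le_pow_left₀ hlhs key 2
  rw [cosh_sub_one_eq a, cosh_sub_one_eq b]
  nlinarith [hsq]

/-- Main pointwise bound. -/
lemma cosh_pointwise {c t d : ℝ} (hd : 0 < d) (ht : |t| ≤ d) :
    Real.cosh (c * t) ≤ 1 + t ^ 2 / d ^ 2 * (Real.cosh (c * d) - 1) := by
  rcases eq_or_ne c 0 with rfl | hc
  · simp
  have h1 : Real.cosh (c * t) = Real.cosh (|c| * |t|) := by
    rw [← Real.cosh_abs, abs_mul]
  have h2 : Real.cosh (c * d) = Real.cosh (|c| * d) := by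
    rw [← Real.cosh_abs, abs_mul, abs_of_pos hd]
  have hcpos : 0 < |c| := abs_pos.2 hc
  have key := cosh_ratio (a := |c| * |t|) (b := |c| * d)
    (by positivity) (by nlinarith [abs_nonneg t])
  have hb2 : 0 < (|c| * d)^2 := by positivity
  have h3 : Real.cosh (|c| * |t|) - 1 ≤ (|c| * |t|)^2/(|c| * d)^2 * (Real.cosh (|c| * d)-1) := by
    rw [div_mul_eq_mul_div, le_div_iff₀ hb2]; nlinarith [key]
  have h4 : (|c| * |t|)^2/(|c| * d)^2 = t^2/d^2 := by
    rw [mul_pow, mul_pow, ← sq_abs t]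
    field_simp
  rw [h1, h2]
  rw [h4] at h3
  linarith

end AuxLemmas

set_option maxHeartbeats 3000000

/-- The exponent `E(γ, δ)` from the paper: `E(γ,δ) = δ x − ln(1 + γ(cosh x − 1))` where
`x = ln( (δ(1−γ) + √(δ²(1−γ)² + γ²(1−δ²))) / (γ(1−δ)) )`. -/
noncomputable def Eexp (γ δ : ℝ) : ℝ :=
  δ * Real.log ((δ * (1 - γ) + Real.sqrt (δ ^ 2 * (1 - γ) ^ 2 + γ ^ 2 * (1 - δ ^ 2)))
      / (γ * (1 - δ)))
    - Real.log (1 + γ *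
        (Real.cosh (Real.log ((δ * (1 - γ)
            + Real.sqrt (δ ^ 2 * (1 - γ) ^ 2 + γ ^ 2 * (1 - δ ^ 2))) / (γ * (1 - δ)))) - 1))

/-- Theorem 1: exponential bound for conditionally symmetric martingales with bounded jumps
and bounded conditional variance. -/
theorem conditionally_symmetric_martingale_bound
    {Ω : Type*} {m0 : MeasurableSpace Ω} {μ : Measure Ω} [IsProbabilityMeasure μ]
    {F : Filtration ℕ m0} {X : ℕ → Ω → ℝ}
    (hmart : Martingale X F μ)
    (hsymm : ∀ k : ℕ, 1 ≤ k → ∀ g : ℝ → ℝ, Measurable g →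
      μ[fun ω => g (X k ω - X (k - 1) ω) | F (k - 1)]
        =ᵐ[μ] μ[fun ω => g (-(X k ω - X (k - 1) ω)) | F (k - 1)])
    {d σ : ℝ} (hd : 0 < d) (hσ : 0 < σ)
    (hbdd : ∀ k : ℕ, 1 ≤ k → ∀ᵐ ω ∂μ, |X k ω - X (k - 1) ω| ≤ d)
    (hvar : ∀ k : ℕ, 1 ≤ k → ∀ᵐ ω ∂μ,
      (μ[fun ω => (X k ω - X (k - 1) ω) ^ 2 | F (k - 1)]) ω ≤ σ ^ 2)
    {α : ℝ} (hα : 0 ≤ α) (hδ : α / d < 1) (n : ℕ) (hn : 1 ≤ n) :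
    μ {ω | ∃ k, 1 ≤ k ∧ k ≤ n ∧ α * n ≤ |X k ω - X 0 ω|}
      ≤ ENNReal.ofReal (2 * Real.exp (-(n : ℝ) * Eexp (σ ^ 2 / d ^ 2) (α / d))) := by
  have hd0 : d ≠ 0 := hd.ne'
  set γ : ℝ := σ ^ 2 / d ^ 2 with hγdef
  set δ : ℝ := α / d with hδdef
  have hγ : 0 < γ := by positivity
  have hδ0 : 0 ≤ δ := div_nonneg hα hd.le
  set R : ℝ := (δ * (1 - γ) + Real.sqrt (δ ^ 2 * (1 - γ) ^ 2 + γ ^ 2 * (1 - δ ^ 2)))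
      / (γ * (1 - δ)) with hRdef
  set x : ℝ := Real.log R with hxdef
  set β : ℝ := 1 + γ * (Real.cosh x - 1) with hβdef
  have hE : Eexp γ δ = δ * x - Real.log β := rfl
  have hden : 0 < γ * (1 - δ) := by nlinarith
  have hsqrtb : γ * (1 - δ) - δ * (1 - γ) ≤
      Real.sqrt (δ ^ 2 * (1 - γ) ^ 2 + γ ^ 2 * (1 - δ ^ 2)) := by
    rcases le_or_gt (γ * (1 - δ) - δ * (1 - γ)) 0 with h | h
    · exact h.trans (Real.sqrt_nonneg _)
    · rw [← Real.sqrt_sq h.le]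
      apply Real.sqrt_le_sqrt
      nlinarith
  have hR1 : 1 ≤ R := by
    rw [hRdef, le_div_iff₀ hden]; linarith
  have hx0 : 0 ≤ x := Real.log_nonneg hR1
  set c : ℝ := x / d with hcdef
  have hc0 : 0 ≤ c := div_nonneg hx0 hd.le
  have hcd : c * d = x := by rw [hcdef]; field_simp
  have hβ1 : 1 ≤ β := by
    have := Real.one_le_cosh x
    nlinarith
  have hβpos : 0 < β := lt_of_lt_of_le one_pos hβ1
  clear_value γ δ R x β c
  -- measurability preliminaries
  have hXsm : ∀ k, StronglyMeasurable (X k) := fun k => (hmart.stronglyMeasurable k).mono (F.le k)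
  have hYbdd : ∀ k : ℕ, ∀ᵐ ω ∂μ, |X k ω - X 0 ω| ≤ k * d := by
    intro k
    induction k with
    | zero => simp
    | succ k ih =>
      filter_upwards [ih, hbdd (k + 1) (Nat.le_add_left 1 k)] with ω h1 h2
      have heq : X (k + 1) ω - X 0 ω = (X (k + 1) ω - X k ω) + (X k ω - X 0 ω) := by ring
      have h2' : |X (k + 1) ω - X k ω| ≤ d := by simpa using h2
      calc |X (k + 1) ω - X 0 ω| ≤ |X (k + 1) ω - X k ω| + |X k ω - X 0 ω| := by
            rw [heq]; exact abs_add_le _ _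
        _ ≤ d + k * d := add_le_add h2' h1
        _ = (k + 1 : ℕ) * d := by push_cast; ring
  have hInt : ∀ (g : Ω → ℝ) (C : ℝ), AEStronglyMeasurable g μ →
      (∀ᵐ ω ∂μ, |g ω| ≤ C) → Integrable g μ := fun g C hm hb =>
    (integrable_const C).mono' hm (by filter_upwards [hb] with ω h; simpa using h)
  -- the key conditional expectation bound for the one-step exponential moment
  have hkey : ∀ s : ℝ, |s| = c → ∀ k, 1 ≤ k →
      ((fun _ => (1:ℝ)) ≤ᵐ[μ] μ[fun ω => Real.exp (s * (X k ω - X (k-1) ω)) | F (k-1)]) ∧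
      (μ[fun ω => Real.exp (s * (X k ω - X (k-1) ω)) | F (k-1)] ≤ᵐ[μ] fun _ => β) := by
    intro s hs k hk
    have hξm : StronglyMeasurable fun ω => X k ω - X (k-1) ω := (hXsm k).sub (hXsm (k-1))
    have hξb := hbdd k hk
    have hintexp : ∀ r : ℝ, Integrable (fun ω => Real.exp (r * (X k ω - X (k-1) ω))) μ := by
      intro r
      apply hInt _ (Real.exp (|r| * d)) (Real.continuous_exp.comp_stronglyMeasurable
        (stronglyMeasurable_const.mul hξm)).aestronglyMeasurable
      filter_upwards [hξb] with ω h
      rw [abs_of_pos (Real.exp_pos _)]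
      apply Real.exp_le_exp.2
      calc r * (X k ω - X (k-1) ω) ≤ |r * (X k ω - X (k-1) ω)| := le_abs_self _
        _ = |r| * |X k ω - X (k-1) ω| := abs_mul _ _
        _ ≤ |r| * d := mul_le_mul_of_nonneg_left h (abs_nonneg r)
    have hintcosh : Integrable (fun ω => Real.cosh (s * (X k ω - X (k-1) ω))) μ := by
      have : (fun ω => Real.cosh (s * (X k ω - X (k-1) ω))) = fun ω =>
          (2:ℝ)⁻¹ * (Real.exp (s * (X k ω - X (k-1) ω))
            + Real.exp (-s * (X k ω - X (k-1) ω))) := by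
        funext ω
        rw [Real.cosh_eq]
        ring_nf
      rw [this]
      exact (((hintexp s).add (hintexp (-s))).const_mul _)
    have hintsq : Integrable (fun ω => (X k ω - X (k-1) ω) ^ 2) μ := by
      apply hInt _ (d^2) ((continuous_pow 2).comp_stronglyMeasurable hξm).aestronglyMeasurable
      filter_upwards [hξb] with ω h
      rw [abs_pow]
      exact pow_le_pow_left₀ (abs_nonneg _) h 2
    -- symmetry: E[exp(s ξ)|F] = E[exp(-s ξ)|F]
    have hsym := hsymm k hk (fun t => Real.exp (s * t))
      (Real.measurable_exp.comp (measurable_const_mul s))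
    have hneg : (fun ω => (fun t => Real.exp (s * t)) (-(X k ω - X (k-1) ω)))
        = fun ω => Real.exp (-s * (X k ω - X (k-1) ω)) := by
      funext ω; ring_nf
    rw [hneg] at hsym
    -- E[exp(s ξ)|F] = E[cosh(s ξ)|F]
    have hcosh_split : (fun ω => Real.cosh (s * (X k ω - X (k-1) ω)))
        = (2:ℝ)⁻¹ • ((fun ω => Real.exp (s * (X k ω - X (k-1) ω)))
            + fun ω => Real.exp (-s * (X k ω - X (k-1) ω))) := by
      funext ω
      simp only [Pi.smul_apply, Pi.add_apply, smul_eq_mul]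
      rw [Real.cosh_eq]
      ring_nf
    have hcosh_eq : μ[fun ω => Real.exp (s * (X k ω - X (k-1) ω)) | F (k-1)]
        =ᵐ[μ] μ[fun ω => Real.cosh (s * (X k ω - X (k-1) ω)) | F (k-1)] := by
      rw [hcosh_split]
      calc μ[fun ω => Real.exp (s * (X k ω - X (k-1) ω)) | F (k-1)]
          =ᵐ[μ] (2:ℝ)⁻¹ • (μ[fun ω => Real.exp (s * (X k ω - X (k-1) ω)) | F (k-1)]
            + μ[fun ω => Real.exp (-s * (X k ω - X (k-1) ω)) | F (k-1)]) := by
            filter_upwards [hsym] with ω hω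
            simp only [Pi.smul_apply, Pi.add_apply, smul_eq_mul]
            rw [← hω]
            ring
        _ =ᵐ[μ] μ[(2:ℝ)⁻¹ • ((fun ω => Real.exp (s * (X k ω - X (k-1) ω)))
            + fun ω => Real.exp (-s * (X k ω - X (k-1) ω))) | F (k-1)] := by
            refine EventuallyEq.symm ((condExp_smul (m := F (k-1)) _ _).trans ?_)
            filter_upwards [condExp_add (m := F (k-1)) (hintexp s) (hintexp (-s))] with ω hω
            simp only [Pi.smul_apply]
            rw [hω]
    constructor
    · -- lower bound
      have h1 : (fun _ : Ω => (1:ℝ)) ≤ᵐ[μ] fun ω => Real.cosh (s * (X k ω - X (k-1) ω)) :=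
        Eventually.of_forall fun ω => Real.one_le_cosh _
      have hmono := condExp_mono (μ := μ) (m := F (k-1)) (integrable_const 1) hintcosh h1
      rw [condExp_const (F.le (k-1))] at hmono
      filter_upwards [hmono, hcosh_eq] with ω h2 h3
      rw [h3]
      exact h2
    · -- upper bound
      set C : ℝ := (Real.cosh x - 1) / d ^ 2 with hCdef
      have hC0 : 0 ≤ C := div_nonneg (by linarith [Real.one_le_cosh x]) (by positivity)
      have hpt : (fun ω => Real.cosh (s * (X k ω - X (k-1) ω))) ≤ᵐ[μ]
          ((fun _ => (1:ℝ)) + C • fun ω => (X k ω - X (k-1) ω) ^ 2) := by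
        filter_upwards [hξb] with ω h
        have hcp := cosh_pointwise (c := s) hd h
        have hsd : Real.cosh (s * d) = Real.cosh x := by
          rw [← Real.cosh_abs, abs_mul, hs, abs_of_pos hd, hcd]
        rw [hsd] at hcp
        simp only [Pi.add_apply, Pi.smul_apply, smul_eq_mul]
        calc Real.cosh (s * (X k ω - X (k-1) ω))
            ≤ 1 + (X k ω - X (k-1) ω) ^ 2 / d ^ 2 * (Real.cosh x - 1) := hcp
          _ = 1 + C * (X k ω - X (k-1) ω) ^ 2 := by rw [hCdef]; ring
      have hintrhs : Integrable ((fun _ => (1:ℝ)) + C • fun ω => (X k ω - X (k-1) ω) ^ 2) μ :=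
        (integrable_const 1).add (hintsq.smul C)
      have hmono := condExp_mono (μ := μ) (m := F (k-1)) hintcosh hintrhs hpt
      have hrhs : μ[(fun _ => (1:ℝ)) + C • fun ω => (X k ω - X (k-1) ω) ^ 2 | F (k-1)]
          =ᵐ[μ] fun ω => 1 + C * (μ[fun ω => (X k ω - X (k-1) ω) ^ 2 | F (k-1)]) ω := by
        refine (condExp_add (m := F (k-1)) (integrable_const 1) (hintsq.smul C)).trans ?_
        rw [condExp_const (F.le (k-1))]
        filter_upwards [condExp_smul (m := F (k-1)) (μ := μ) C
          (fun ω => (X k ω - X (k-1) ω) ^ 2)] with ω hω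
        simp only [Pi.add_apply]
        rw [hω]
        simp [smul_eq_mul]
      have hβeq : β = 1 + σ ^ 2 * C := by
        rw [hβdef, hγdef, hCdef]; ring
      filter_upwards [hmono, hrhs, hvar k hk, hcosh_eq] with ω h1 h2 h3 h4
      rw [h4, hβeq]
      rw [h2] at h1
      nlinarith [h1, h3, hC0]
  -- the exponential process
  have hjumpint : ∀ (r : ℝ) (k : ℕ), 1 ≤ k →
      Integrable (fun ω => Real.exp (r * (X k ω - X (k-1) ω))) μ := by
    intro r k hk
    apply hInt _ (Real.exp (|r| * d)) (Real.continuous_exp.comp_stronglyMeasurable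
      (stronglyMeasurable_const.mul ((hXsm k).sub (hXsm (k-1))))).aestronglyMeasurable
    filter_upwards [hbdd k hk] with ω h
    rw [abs_of_pos (Real.exp_pos _)]
    apply Real.exp_le_exp.2
    calc r * (X k ω - X (k-1) ω) ≤ |r * (X k ω - X (k-1) ω)| := le_abs_self _
      _ = |r| * |X k ω - X (k-1) ω| := abs_mul _ _
      _ ≤ |r| * d := mul_le_mul_of_nonneg_left h (abs_nonneg r)
  have hexp_repr : ∀ (s : ℝ) (k : ℕ), (fun ω => Real.exp (s * (X (k+1) ω - X 0 ω)))
      = (fun ω => Real.exp (s * (X k ω - X 0 ω)))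
        * (fun ω => Real.exp (s * (X (k+1) ω - X k ω))) := by
    intro s k
    funext ω
    simp only [Pi.mul_apply]
    rw [← Real.exp_add]
    ring_nf
  have hfint : ∀ (s : ℝ), |s| = c → ∀ k : ℕ,
      Integrable (fun ω => Real.exp (s * (X k ω - X 0 ω))) μ := by
    intro s hs k
    apply hInt _ (Real.exp (c * (k * d))) (Real.continuous_exp.comp_stronglyMeasurable
      (stronglyMeasurable_const.mul ((hXsm k).sub (hXsm 0)))).aestronglyMeasurable
    filter_upwards [hYbdd k] with ω h
    rw [abs_of_pos (Real.exp_pos _)]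
    apply Real.exp_le_exp.2
    calc s * (X k ω - X 0 ω) ≤ |s * (X k ω - X 0 ω)| := le_abs_self _
      _ = c * |X k ω - X 0 ω| := by rw [abs_mul, hs]
      _ ≤ c * (k * d) := mul_le_mul_of_nonneg_left h hc0
  have hadp : ∀ (s : ℝ), StronglyAdapted F (fun k ω => Real.exp (s * (X k ω - X 0 ω))) := by
    intro s k
    exact Real.continuous_exp.comp_stronglyMeasurable
      (stronglyMeasurable_const.mul
        ((hmart.stronglyAdapted k).sub ((hmart.stronglyAdapted 0).mono (F.mono (Nat.zero_le k)))))
  have hstep : ∀ s, |s| = c → ∀ k : ℕ,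
      ((fun ω => Real.exp (s * (X k ω - X 0 ω))) ≤ᵐ[μ]
        μ[fun ω => Real.exp (s * (X (k+1) ω - X 0 ω)) | F k]) ∧
      (μ[fun ω => Real.exp (s * (X (k+1) ω - X 0 ω)) | F k] ≤ᵐ[μ]
        fun ω => β * Real.exp (s * (X k ω - X 0 ω))) := by
    intro s hs k
    have hkey' := hkey s hs (k+1) (Nat.le_add_left 1 k)
    simp only [Nat.add_sub_cancel] at hkey'
    have hjint := hjumpint s (k+1) (Nat.le_add_left 1 k)
    simp only [Nat.add_sub_cancel] at hjint
    have hpull : μ[fun ω => Real.exp (s * (X (k+1) ω - X 0 ω)) | F k]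
        =ᵐ[μ] (fun ω => Real.exp (s * (X k ω - X 0 ω)))
          * μ[fun ω => Real.exp (s * (X (k+1) ω - X k ω)) | F k] := by
      rw [hexp_repr s k]
      exact condExp_mul_of_stronglyMeasurable_left (hadp s k)
        (by rw [← hexp_repr s k]; exact hfint s hs (k+1)) hjint
    constructor
    · filter_upwards [hpull, hkey'.1] with ω h1 h2
      rw [h1]
      simp only [Pi.mul_apply]
      have h2' : (1:ℝ) ≤ (μ[fun ω => Real.exp (s * (X (k+1) ω - X k ω)) | F k]) ω := h2
      exact le_mul_of_one_le_right (Real.exp_pos _).le h2'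
    · filter_upwards [hpull, hkey'.2] with ω h1 h2
      rw [h1]
      simp only [Pi.mul_apply]
      have h2' : (μ[fun ω => Real.exp (s * (X (k+1) ω - X k ω)) | F k]) ω ≤ β := h2
      exact (mul_le_mul_of_nonneg_left h2' (Real.exp_pos _).le).trans_eq (mul_comm _ _)
  have hsubm : ∀ s, |s| = c →
      Submartingale (fun k ω => Real.exp (s * (X k ω - X 0 ω))) F μ := fun s hs =>
    submartingale_nat (hadp s) (hfint s hs) fun k => (hstep s hs k).1
  have hibound : ∀ s, |s| = c → ∀ k : ℕ,
      ∫ ω, Real.exp (s * (X k ω - X 0 ω)) ∂μ ≤ β ^ k := by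
    intro s hs k
    induction k with
    | zero => simp
    | succ k ih =>
      have h1 : ∫ ω, Real.exp (s * (X (k+1) ω - X 0 ω)) ∂μ
          = ∫ ω, (μ[fun ω => Real.exp (s * (X (k+1) ω - X 0 ω)) | F k]) ω ∂μ :=
        (integral_condExp (F.le k)).symm
      rw [h1]
      calc ∫ ω, (μ[fun ω => Real.exp (s * (X (k+1) ω - X 0 ω)) | F k]) ω ∂μ
          ≤ ∫ ω, β * Real.exp (s * (X k ω - X 0 ω)) ∂μ :=
            integral_mono_ae integrable_condExp ((hfint s hs k).const_mul β) (hstep s hs k).2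
        _ = β * ∫ ω, Real.exp (s * (X k ω - X 0 ω)) ∂μ := integral_const_mul β _
        _ ≤ β * β ^ k := mul_le_mul_of_nonneg_left ih hβpos.le
        _ = β ^ (k+1) := (pow_succ' β k).symm
  -- Doob's maximal inequality for each sign
  have hdoob : ∀ s, |s| = c →
      μ {ω | Real.exp (c * (α * n)) ≤ (Finset.range (n+1)).sup' Finset.nonempty_range_add_one
          fun k => Real.exp (s * (X k ω - X 0 ω))}
        ≤ ENNReal.ofReal (Real.exp (-(c * (α * n))) * β ^ n) := by
    intro s hs
    set ε : NNReal := (Real.exp (c * (α * n))).toNNReal with hεdef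
    have hεc : (ε : ℝ) = Real.exp (c * (α * n)) :=
      Real.coe_toNNReal _ (Real.exp_pos _).le
    have hnn : 0 ≤ (fun k ω => Real.exp (s * (X k ω - X 0 ω))) :=
      fun k ω => (Real.exp_pos _).le
    have hmax := maximal_ineq (hsubm s hs) hnn (ε := ε) n
    rw [hεc] at hmax
    have hset : ∫ ω in {ω | Real.exp (c * (α * n)) ≤ (Finset.range (n+1)).sup'
          Finset.nonempty_range_add_one fun k => Real.exp (s * (X k ω - X 0 ω))},
          Real.exp (s * (X n ω - X 0 ω)) ∂μ
        ≤ ∫ ω, Real.exp (s * (X n ω - X 0 ω)) ∂μ :=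
      setIntegral_le_integral (hfint s hs n)
        (Eventually.of_forall fun ω => (Real.exp_pos _).le)
    have h2 : (ε : ENNReal) * μ {ω | Real.exp (c * (α * n)) ≤ (Finset.range (n+1)).sup'
          Finset.nonempty_range_add_one fun k => Real.exp (s * (X k ω - X 0 ω))}
        ≤ ENNReal.ofReal (β ^ n) := by
      refine le_trans ?_ (ENNReal.ofReal_le_ofReal (hset.trans (hibound s hs n)))
      exact hmax
    have hεinv : ENNReal.ofReal (Real.exp (-(c * (α * n)))) * (ε : ENNReal) = 1 := by
      have : ((ε : NNReal) : ENNReal) = ENNReal.ofReal (Real.exp (c * (α * n))) := by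
        rw [ENNReal.ofReal, hεdef]
      rw [this, ← ENNReal.ofReal_mul (Real.exp_pos _).le, ← Real.exp_add]
      norm_num
    calc μ {ω | Real.exp (c * (α * n)) ≤ (Finset.range (n+1)).sup'
            Finset.nonempty_range_add_one fun k => Real.exp (s * (X k ω - X 0 ω))}
        = (ENNReal.ofReal (Real.exp (-(c * (α * n)))) * ε) * μ _ := by rw [hεinv, one_mul]
      _ = ENNReal.ofReal (Real.exp (-(c * (α * n)))) * ((ε : ENNReal) * μ _) := by
          rw [mul_assoc]
      _ ≤ ENNReal.ofReal (Real.exp (-(c * (α * n)))) * ENNReal.ofReal (β ^ n) :=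
          mul_le_mul_right h2 _
      _ = ENNReal.ofReal (Real.exp (-(c * (α * n))) * β ^ n) :=
          (ENNReal.ofReal_mul (Real.exp_pos _).le).symm
  -- event inclusion
  have hincl : {ω | ∃ k, 1 ≤ k ∧ k ≤ n ∧ α * n ≤ |X k ω - X 0 ω|} ⊆
      {ω | Real.exp (c * (α * n)) ≤ (Finset.range (n+1)).sup' Finset.nonempty_range_add_one
          fun k => Real.exp (c * (X k ω - X 0 ω))} ∪
      {ω | Real.exp (c * (α * n)) ≤ (Finset.range (n+1)).sup' Finset.nonempty_range_add_one
          fun k => Real.exp ((-c) * (X k ω - X 0 ω))} := by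
    rintro ω ⟨k, hk1, hkn, hkabs⟩
    have hkmem : k ∈ Finset.range (n+1) := Finset.mem_range.2 (Nat.lt_succ_of_le hkn)
    rcases le_abs.1 hkabs with h | h
    · left
      refine le_trans ?_ (Finset.le_sup'
        (fun k => Real.exp (c * (X k ω - X 0 ω))) hkmem)
      exact Real.exp_le_exp.2 (mul_le_mul_of_nonneg_left h hc0)
    · right
      refine le_trans ?_ (Finset.le_sup'
        (fun k => Real.exp ((-c) * (X k ω - X 0 ω))) hkmem)
      apply Real.exp_le_exp.2
      have : (-c) * (X k ω - X 0 ω) = c * (-(X k ω - X 0 ω)) := by ring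
      rw [this]
      exact mul_le_mul_of_nonneg_left h hc0
  have habs : |c| = c := abs_of_nonneg hc0
  have habsneg : |(-c)| = c := by rw [abs_neg]; exact habs
  have hq0 : 0 ≤ Real.exp (-(c * (α * n))) * β ^ n :=
    mul_nonneg (Real.exp_pos _).le (pow_nonneg hβpos.le n)
  have hqeq : Real.exp (-(c * (α * n))) * β ^ n = Real.exp (-(n : ℝ) * Eexp γ δ) := by
    rw [hE]
    nth_rewrite 1 [← Real.exp_log hβpos]
    rw [← Real.exp_nat_mul, ← Real.exp_add]
    congr 1
    have hca : c * α = δ * x := by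
      rw [hcdef, hδdef]
      field_simp
    linear_combination (-(n:ℝ)) * hca
  calc μ {ω | ∃ k, 1 ≤ k ∧ k ≤ n ∧ α * n ≤ |X k ω - X 0 ω|}
      ≤ μ ({ω | Real.exp (c * (α * n)) ≤ (Finset.range (n+1)).sup'
            Finset.nonempty_range_add_one fun k => Real.exp (c * (X k ω - X 0 ω))} ∪
          {ω | Real.exp (c * (α * n)) ≤ (Finset.range (n+1)).sup'
            Finset.nonempty_range_add_one fun k => Real.exp ((-c) * (X k ω - X 0 ω))}) :=
        measure_mono hincl
    _ ≤ μ {ω | Real.exp (c * (α * n)) ≤ (Finset.range (n+1)).sup'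
            Finset.nonempty_range_add_one fun k => Real.exp (c * (X k ω - X 0 ω))} +
        μ {ω | Real.exp (c * (α * n)) ≤ (Finset.range (n+1)).sup'
            Finset.nonempty_range_add_one fun k => Real.exp ((-c) * (X k ω - X 0 ω))} :=
        measure_union_le _ _
    _ ≤ ENNReal.ofReal (Real.exp (-(c * (α * n))) * β ^ n)
        + ENNReal.ofReal (Real.exp (-(c * (α * n))) * β ^ n) :=
        add_le_add (hdoob c habs) (hdoob (-c) habsneg)
    _ = ENNReal.ofReal (2 * (Real.exp (-(c * (α * n))) * β ^ n)) := by
        rw [← ENNReal.ofReal_add hq0 hq0]; ring_nf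
    _ = ENNReal.ofReal (2 * Real.exp (-(n : ℝ) * Eexp γ δ)) := by rw [hqeq]
end

section
/- Let {X_k, F_k}_{k≥0} be a discrete-time real-valued martingale. Assume that for some fixed numbers d, σ > 0, almost surely |X_k − X_{k−1}| ≤ d and E[(X_k − X_{k−1})² | F_{k−1}] ≤ σ² for every k ≥ 1. Set γ = σ²/d² and δ = α/d. Then for every α ≥ 0 with δ ∈ [0,1] and every n ≥ 1, P( max_{1≤k≤n} |X_k − X_0| ≥ αn ) ≤ 2 exp( −n D( (δ+γ)/(1+γ) ‖ γ/(1+γ) ) ). -/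
open MeasureTheory ProbabilityTheory Filter Set
open scoped ENNReal NNReal

/-- Kullback–Leibler divergence (natural base) between the Bernoulli distributions
`(p, 1−p)` and `(q, 1−q)`; the convention `0 · ln 0 = 0` holds automatically since
`Real.log 0 = 0` in Lean. -/
noncomputable def klBer (p q : ℝ) : ℝ :=
  p * Real.log (p / q) + (1 - p) * Real.log ((1 - p) / (1 - q))


section Aux
open Real Finset


noncomputable def bInt (x : ℝ) : ℝ := ∫ t in (0:ℝ)..1, (1-t) * Real.exp (t*x)

lemma bInt_nonneg (x : ℝ) : 0 ≤ bInt x := by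
  apply intervalIntegral.integral_nonneg (by norm_num)
  intro t ht
  have : 0 ≤ 1 - t := by linarith [ht.2]
  positivity

lemma bInt_mono {x y : ℝ} (h : x ≤ y) : bInt x ≤ bInt y := by
  apply intervalIntegral.integral_mono_on (by norm_num)
  · exact (Continuous.intervalIntegrable (by continuity) _ _)
  · exact (Continuous.intervalIntegrable (by continuity) _ _)
  · intro t ht
    have h0 : 0 ≤ t := ht.1
    have h1 : 0 ≤ 1 - t := by linarith [ht.2]
    have : t * x ≤ t * y := mul_le_mul_of_nonneg_left h h0
    exact mul_le_mul_of_nonneg_left (Real.exp_le_exp.2 this) h1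

lemma exp_eq_bInt (x : ℝ) : Real.exp x = 1 + x + x^2 * bInt x := by
  rcases eq_or_ne x 0 with rfl | hx
  · simp
  · have key : ∀ t ∈ Set.uIcc (0:ℝ) 1, HasDerivAt
        (fun t => Real.exp (t*x) * ((1-t)/x + 1/x^2)) ((1-t) * Real.exp (t*x)) t := by
      intro t _
      have h1 : HasDerivAt (fun t : ℝ => t * x) x t := by
        simpa using (hasDerivAt_id t).mul_const x
      have h2 : HasDerivAt (fun t : ℝ => Real.exp (t*x)) (Real.exp (t*x) * x) t :=
        h1.exp
      have h3 : HasDerivAt (fun t : ℝ => (1-t)/x + 1/x^2) (-(1/x)) t := by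
        have : HasDerivAt (fun t : ℝ => (1-t)) (-1) t := by
          simpa using ((hasDerivAt_id t).const_sub 1)
        have := (this.div_const x).add_const (1/x^2); simpa [neg_div] using this
      have := h2.mul h3
      refine this.congr_deriv ?_
      field_simp
      ring
    have hcont : IntervalIntegrable (fun t => (1-t) * Real.exp (t*x)) volume 0 1 :=
      (Continuous.intervalIntegrable (by continuity) _ _)
    have := intervalIntegral.integral_eq_sub_of_hasDerivAt key hcont
    rw [bInt, this]
    field_simp
    simp only [mul_zero, Real.exp_zero]
    ring

/-- the pointwise quadratic bound -/
lemma exp_pointwise {γ d l y : ℝ} (hγ : 0 < γ) (hd : 0 < d) (hl : 0 ≤ l) (hy : y ≤ d) :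
    Real.exp (l*y) ≤ Real.exp (-(l*γ*d)) *
      (1 + l*(y+γ*d) + l^2 * bInt (l*(1+γ)*d) * (y+γ*d)^2) := by
  have hx : l*(y+γ*d) ≤ l*(1+γ)*d := by nlinarith
  have h1 : Real.exp (l*(y+γ*d)) ≤ 1 + l*(y+γ*d) + l^2 * bInt (l*(1+γ)*d) * (y+γ*d)^2 := by
    rw [exp_eq_bInt (l*(y+γ*d))]
    have := bInt_mono hx
    nlinarith [sq_nonneg (l*(y+γ*d))]
  calc Real.exp (l*y) = Real.exp (-(l*γ*d)) * Real.exp (l*(y+γ*d)) := by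
        rw [← Real.exp_add]; ring_nf
    _ ≤ _ := by
        apply mul_le_mul_of_nonneg_left h1 (le_of_lt (Real.exp_pos _))

/-- m ≥ 1 -/
lemma one_le_m {γ d l : ℝ} (hγ : 0 < γ) (hd : 0 < d) (hl : 0 ≤ l) :
    1 ≤ γ/(1+γ) * Real.exp (l*d) + 1/(1+γ) * Real.exp (-(l*γ*d)) := by
  have h1 : 1 + l*d ≤ Real.exp (l*d) := by linarith [Real.add_one_le_exp (l*d)]
  have h2 : 1 + -(l*γ*d) ≤ Real.exp (-(l*γ*d)) := by linarith [Real.add_one_le_exp (-(l*γ*d))]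
  have hγ1 : 0 < 1 + γ := by linarith
  have e1 : 0 < γ/(1+γ) := by positivity
  have e2 : (0:ℝ) < 1/(1+γ) := by positivity
  have := mul_le_mul_of_nonneg_left h1 e1.le
  have := mul_le_mul_of_nonneg_left h2 e2.le
  have key : γ/(1+γ) * (1 + l*d) + 1/(1+γ) * (1 + -(l*γ*d)) = 1 := by field_simp; ring
  linarith

lemma onesided {Ω : Type*} {m0 : MeasurableSpace Ω} {μ : Measure Ω} [IsProbabilityMeasure μ]
    {F : Filtration ℕ m0} {X : ℕ → Ω → ℝ} (hmart : Martingale X F μ)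
    {d σ γ : ℝ} (hd : 0 < d) (hγ : 0 < γ) (hγσ : σ^2 = γ * d^2)
    (hbdd : ∀ k : ℕ, 1 ≤ k → ∀ᵐ ω ∂μ, |X k ω - X (k - 1) ω| ≤ d)
    (hvar : ∀ k : ℕ, 1 ≤ k → ∀ᵐ ω ∂μ,
      (μ[fun ω => (X k ω - X (k - 1) ω) ^ 2 | F (k - 1)]) ω ≤ σ ^ 2)
    {l : ℝ} (hl : 0 ≤ l) (c : ℝ) (n : ℕ) :
    μ {ω | ∃ k, 1 ≤ k ∧ k ≤ n ∧ c ≤ X k ω - X 0 ω} ≤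
      ENNReal.ofReal ((γ/(1+γ) * Real.exp (l*d) + 1/(1+γ) * Real.exp (-(l*γ*d)))^n
        * Real.exp (-(l*c))) := by
  set M : ℝ := γ/(1+γ) * Real.exp (l*d) + 1/(1+γ) * Real.exp (-(l*γ*d)) with hM
  have hM1 : 1 ≤ M := one_le_m hγ hd hl
  have hM0 : 0 < M := lt_of_lt_of_le one_pos hM1
  set S : ℕ → Ω → ℝ := fun k ω => Real.exp (l*(X k ω - X 0 ω)) with hS
  -- basic a.e. bounds
  have hXd : ∀ k : ℕ, ∀ᵐ ω ∂μ, |X (k+1) ω - X k ω| ≤ d := by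
    intro k; simpa using hbdd (k+1) (Nat.le_add_left 1 k)
  have hXv : ∀ k : ℕ, ∀ᵐ ω ∂μ,
      (μ[fun ω => (X (k+1) ω - X k ω) ^ 2 | F k]) ω ≤ σ ^ 2 := by
    intro k; simpa using hvar (k+1) (Nat.le_add_left 1 k)
  have hbd0 : ∀ k : ℕ, ∀ᵐ ω ∂μ, |X k ω - X 0 ω| ≤ k*d := by
    intro k
    induction k with
    | zero => simp
    | succ k ih =>
        filter_upwards [ih, hXd k] with ω h1 h2
        have : |X (k+1) ω - X 0 ω| ≤ |X (k+1) ω - X k ω| + |X k ω - X 0 ω| := abs_sub_le _ _ _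
        push_cast
        push_cast at h1
        nlinarith
  -- measurability and integrability
  have mS : ∀ k : ℕ, StronglyMeasurable[F k] (S k) := by
    intro k
    exact Real.continuous_exp.comp_stronglyMeasurable
      (((hmart.stronglyAdapted k).sub ((hmart.stronglyAdapted 0).mono (F.mono (Nat.zero_le k)))).const_mul l)
  have hSnn : ∀ k ω, 0 ≤ S k ω := fun k ω => (Real.exp_pos _).le
  have hSbd : ∀ k : ℕ, ∀ᵐ ω ∂μ, ‖S k ω‖ ≤ Real.exp (l*(k*d)) := by
    intro k
    filter_upwards [hbd0 k] with ω h
    rw [Real.norm_eq_abs, abs_of_pos (Real.exp_pos _)]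
    apply Real.exp_le_exp.2
    have : X k ω - X 0 ω ≤ k*d := le_trans (le_abs_self _) h
    exact mul_le_mul_of_nonneg_left this hl
  have hSint : ∀ k : ℕ, Integrable (S k) μ := fun k =>
    Integrable.mono' (integrable_const _) ((mS k).mono (F.le k)).aestronglyMeasurable (hSbd k)
  have hΔm : ∀ k : ℕ, StronglyMeasurable[F (k+1)] (fun ω => X (k+1) ω - X k ω) := fun k =>
    (hmart.stronglyAdapted (k+1)).sub ((hmart.stronglyAdapted k).mono (F.mono (Nat.le_succ k)))
  have hΔint : ∀ k : ℕ, Integrable (fun ω => X (k+1) ω - X k ω) μ := fun k =>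
    (hmart.integrable (k+1)).sub (hmart.integrable k)
  have hΔ2int : ∀ k : ℕ, Integrable (fun ω => (X (k+1) ω - X k ω)^2) μ := by
    intro k
    refine Integrable.mono' (integrable_const (d^2))
      ((((hΔm k).mono (F.le _)).pow 2).aestronglyMeasurable) ?_
    filter_upwards [hXd k] with ω h
    rw [Real.norm_eq_abs, abs_of_nonneg (sq_nonneg _)]
    calc (X (k+1) ω - X k ω)^2 = |X (k+1) ω - X k ω|^2 := (sq_abs _).symm
      _ ≤ d^2 := by nlinarith [abs_nonneg (X (k+1) ω - X k ω)]
  have hEint : ∀ k : ℕ, Integrable (fun ω => Real.exp (l*(X (k+1) ω - X k ω))) μ := by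
    intro k
    refine Integrable.mono' (integrable_const (Real.exp (l*d)))
      (Real.continuous_exp.comp_stronglyMeasurable
        (((hΔm k).mono (F.le _)).const_mul l)).aestronglyMeasurable ?_
    filter_upwards [hXd k] with ω h
    rw [Real.norm_eq_abs, abs_of_pos (Real.exp_pos _)]
    exact Real.exp_le_exp.2 (mul_le_mul_of_nonneg_left (le_trans (le_abs_self _) h) hl)
  -- conditional expectation of increments is 0
  have hc0 : ∀ k : ℕ, μ[(fun ω => X (k+1) ω - X k ω)|F k] =ᵐ[μ] 0 := by
    intro k
    have h1 : μ[(fun ω => X (k+1) ω - X k ω)|F k] =ᵐ[μ] μ[X (k+1)|F k] - μ[X k|F k] :=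
      condExp_sub (hmart.integrable (k+1)) (hmart.integrable k) _
    have h2 : μ[X (k+1)|F k] =ᵐ[μ] X k := hmart.condExp_ae_eq (Nat.le_succ k)
    have h3 : μ[X k|F k] = X k :=
      condExp_of_stronglyMeasurable (F.le k) (hmart.stronglyAdapted k) (hmart.integrable k)
    filter_upwards [h1, h2] with ω e1 e2
    simp only [Pi.sub_apply, Pi.zero_apply] at *
    rw [e1, e2, h3]; ring
  -- per-step bound on the mgf
  set bI : ℝ := bInt (l*(1+γ)*d) with hbI
  set a : ℝ := Real.exp (-(l*γ*d)) * (1 + l*(γ*d) + l^2*bI*(γ*d)^2) with ha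
  set b : ℝ := Real.exp (-(l*γ*d)) * (l + l^2*bI*(2*(γ*d))) with hb
  set cc : ℝ := Real.exp (-(l*γ*d)) * (l^2*bI) with hcc
  have hccnn : 0 ≤ cc := by
    have := bInt_nonneg (l*(1+γ)*d)
    rw [hcc]; positivity
  have haM : a + cc*σ^2 = M := by
    have hexp : Real.exp (l*d)
        = Real.exp (-(l*γ*d)) * (1 + l*(1+γ)*d + (l*(1+γ)*d)^2 * bI) := by
      rw [hbI, ← exp_eq_bInt, ← Real.exp_add]
      congr 1; ring
    have h1γ : (1+γ) ≠ 0 := by positivity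
    rw [ha, hcc, hM, hexp, hγσ]
    field_simp
    ring
  have step : ∀ k : ℕ, ∫ ω, S (k+1) ω ∂μ ≤ M * ∫ ω, S k ω ∂μ := by
    intro k
    have hint1 : Integrable (fun ω => S k ω * (X (k+1) ω - X k ω)) μ :=
      Integrable.bdd_mul (hΔint k) ((mS k).mono (F.le k)).aestronglyMeasurable (hSbd k)
    have hint2 : Integrable (fun ω => S k ω * (X (k+1) ω - X k ω)^2) μ :=
      Integrable.bdd_mul (hΔ2int k) ((mS k).mono (F.le k)).aestronglyMeasurable (hSbd k)
    have hintR : Integrable (fun ω => S k ω * a + (b*(S k ω * (X (k+1) ω - X k ω))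
        + cc*(S k ω * (X (k+1) ω - X k ω)^2))) μ :=
      ((hSint k).mul_const a).add ((hint1.const_mul b).add (hint2.const_mul cc))
    have hpt : ∀ᵐ ω ∂μ, S (k+1) ω ≤ S k ω * a + (b*(S k ω * (X (k+1) ω - X k ω))
        + cc*(S k ω * (X (k+1) ω - X k ω)^2)) := by
      filter_upwards [hXd k] with ω h
      have hsplit : S (k+1) ω = S k ω * Real.exp (l*(X (k+1) ω - X k ω)) := by
        show Real.exp _ = Real.exp _ * Real.exp _
        rw [← Real.exp_add]; congr 1; ring
      have hyd : X (k+1) ω - X k ω ≤ d := le_trans (le_abs_self _) h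
      have hq := exp_pointwise hγ hd hl hyd
      have hqq : Real.exp (-(l*γ*d)) * (1 + l*((X (k+1) ω - X k ω)+γ*d)
            + l^2 * bInt (l*(1+γ)*d) * ((X (k+1) ω - X k ω)+γ*d)^2)
          = a + (b*(X (k+1) ω - X k ω) + cc*(X (k+1) ω - X k ω)^2) := by
        rw [ha, hb, hcc, hbI]; ring
      rw [hsplit]
      calc S k ω * Real.exp (l*(X (k+1) ω - X k ω))
          ≤ S k ω * (a + (b*(X (k+1) ω - X k ω) + cc*(X (k+1) ω - X k ω)^2)) := by
            apply mul_le_mul_of_nonneg_left _ (hSnn k ω)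
            rw [← hqq]; exact hq
        _ = S k ω * a + (b*(S k ω * (X (k+1) ω - X k ω))
            + cc*(S k ω * (X (k+1) ω - X k ω)^2)) := by ring
    have key1 : ∫ ω, S (k+1) ω ∂μ ≤ ∫ ω, (S k ω * a + (b*(S k ω * (X (k+1) ω - X k ω))
        + cc*(S k ω * (X (k+1) ω - X k ω)^2))) ∂μ :=
      integral_mono_ae (hSint (k+1)) hintR hpt
    have hzero : ∫ ω, S k ω * (X (k+1) ω - X k ω) ∂μ = 0 := by
      have hint1' : Integrable (S k * fun ω => X (k+1) ω - X k ω) μ := hint1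
      have hpull := condExp_mul_of_stronglyMeasurable_left (mS k) hint1' (hΔint k)
      have hze : μ[(S k * fun ω => X (k+1) ω - X k ω)|F k] =ᵐ[μ] 0 := by
        filter_upwards [hpull, hc0 k] with ω e1 e2
        simp only [Pi.mul_apply, Pi.zero_apply] at *
        rw [e1, e2]; ring
      calc ∫ ω, S k ω * (X (k+1) ω - X k ω) ∂μ
          = ∫ ω, (μ[(S k * fun ω => X (k+1) ω - X k ω)|F k]) ω ∂μ :=
            (integral_condExp (F.le k)).symm
        _ = ∫ _ω, (0:ℝ) ∂μ := integral_congr_ae hze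
        _ = 0 := integral_zero _ _
    have hvarb : ∫ ω, S k ω * (X (k+1) ω - X k ω)^2 ∂μ ≤ σ^2 * ∫ ω, S k ω ∂μ := by
      have hint2' : Integrable (S k * fun ω => (X (k+1) ω - X k ω)^2) μ := hint2
      have hpull := condExp_mul_of_stronglyMeasurable_left (mS k) hint2' (hΔ2int k)
      have hcondint : Integrable (fun ω => S k ω *
          (μ[fun ω => (X (k+1) ω - X k ω)^2|F k]) ω) μ :=
        Integrable.bdd_mul integrable_condExp
          ((mS k).mono (F.le k)).aestronglyMeasurable (hSbd k)
      calc ∫ ω, S k ω * (X (k+1) ω - X k ω)^2 ∂μ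
          = ∫ ω, (μ[(S k * fun ω => (X (k+1) ω - X k ω)^2)|F k]) ω ∂μ :=
            (integral_condExp (F.le k)).symm
        _ = ∫ ω, S k ω * (μ[fun ω => (X (k+1) ω - X k ω)^2|F k]) ω ∂μ :=
            integral_congr_ae hpull
        _ ≤ ∫ ω, S k ω * σ^2 ∂μ := by
            refine integral_mono_ae hcondint ((hSint k).mul_const _) ?_
            filter_upwards [hXv k] with ω h
            exact mul_le_mul_of_nonneg_left h (hSnn k ω)
        _ = σ^2 * ∫ ω, S k ω ∂μ := by rw [integral_mul_const]; ring
    have hSknn : 0 ≤ ∫ ω, S k ω ∂μ := integral_nonneg (fun ω => hSnn k ω)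
    have hexpand : ∫ ω, (S k ω * a + (b*(S k ω * (X (k+1) ω - X k ω))
        + cc*(S k ω * (X (k+1) ω - X k ω)^2))) ∂μ
        = (∫ ω, S k ω ∂μ) * a + (b * ∫ ω, S k ω * (X (k+1) ω - X k ω) ∂μ
          + cc * ∫ ω, S k ω * (X (k+1) ω - X k ω)^2 ∂μ) := by
      have i1 : Integrable (fun ω => b*(S k ω * (X (k+1) ω - X k ω))
          + cc*(S k ω * (X (k+1) ω - X k ω)^2)) μ :=
        (hint1.const_mul b).add (hint2.const_mul cc)
      rw [integral_add ((hSint k).mul_const a) i1,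
        integral_add (hint1.const_mul b) (hint2.const_mul cc),
        integral_mul_const, MeasureTheory.integral_const_mul, MeasureTheory.integral_const_mul]
    have hccσ : cc * ∫ ω, S k ω * (X (k+1) ω - X k ω)^2 ∂μ
        ≤ cc * (σ^2 * ∫ ω, S k ω ∂μ) := mul_le_mul_of_nonneg_left hvarb hccnn
    calc ∫ ω, S (k+1) ω ∂μ ≤ _ := key1
      _ = (∫ ω, S k ω ∂μ) * a + (b * ∫ ω, S k ω * (X (k+1) ω - X k ω) ∂μ
          + cc * ∫ ω, S k ω * (X (k+1) ω - X k ω)^2 ∂μ) := hexpand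
      _ ≤ (∫ ω, S k ω ∂μ) * a + (b * 0 + cc * (σ^2 * ∫ ω, S k ω ∂μ)) := by
          rw [hzero]; linarith
      _ = (a + cc*σ^2) * ∫ ω, S k ω ∂μ := by ring
      _ = M * ∫ ω, S k ω ∂μ := by rw [haM]
  -- mgf bound by induction
  have intS : ∀ k : ℕ, ∫ ω, S k ω ∂μ ≤ M^k := by
    intro k
    induction k with
    | zero =>
        have : S 0 = fun _ω => (1:ℝ) := by
          funext ω; show Real.exp _ = 1; rw [sub_self, mul_zero, Real.exp_zero]
        rw [this]
        simp
    | succ k ih =>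
        calc ∫ ω, S (k+1) ω ∂μ ≤ M * ∫ ω, S k ω ∂μ := step k
          _ ≤ M * M^k := mul_le_mul_of_nonneg_left ih hM0.le
          _ = M^(k+1) := by ring
  -- submartingale property
  have hsub : Submartingale S F μ := by
    refine submartingale_nat (fun k => mS k) hSint (fun i => ?_)
    have hprod : S (i+1) = S i * (fun ω => Real.exp (l*(X (i+1) ω - X i ω))) := by
      funext ω
      show Real.exp _ = Real.exp _ * Real.exp _
      rw [← Real.exp_add]; congr 1; ring
    have hpull : μ[S (i+1)|F i] =ᵐ[μ]
        S i * μ[(fun ω => Real.exp (l*(X (i+1) ω - X i ω)))|F i] := by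
      rw [hprod]
      exact condExp_mul_of_stronglyMeasurable_left (mS i) (hprod ▸ hSint (i+1)) (hEint i)
    have hone : ∀ᵐ ω ∂μ, 1 ≤ (μ[(fun ω => Real.exp (l*(X (i+1) ω - X i ω)))|F i]) ω := by
      have hlin_int : Integrable (fun ω => 1 + l*(X (i+1) ω - X i ω)) μ :=
        (integrable_const 1).add ((hΔint i).const_mul l)
      have hmono := condExp_mono (m := F i) hlin_int (hEint i)
        (Filter.Eventually.of_forall (fun ω => by
          show 1 + l*(X (i+1) ω - X i ω) ≤ Real.exp (l*(X (i+1) ω - X i ω))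
          have := Real.add_one_le_exp (l*(X (i+1) ω - X i ω)); linarith))
      have hsum : (fun ω => 1 + l*(X (i+1) ω - X i ω))
          = (fun _ω => (1:ℝ)) + l • (fun ω => X (i+1) ω - X i ω) := by
        funext ω; simp [Pi.add_apply]
      have hlin : μ[(fun ω => 1 + l*(X (i+1) ω - X i ω))|F i] =ᵐ[μ] fun _ω => (1:ℝ) := by
        rw [hsum]
        have h1 := condExp_add (m := F i) (μ := μ) (integrable_const (1:ℝ))
          ((hΔint i).smul l)
        have h2 := condExp_smul (m := F i) (μ := μ) l (fun ω => X (i+1) ω - X i ω)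
        filter_upwards [h1, h2, hc0 i] with ω e1 e2 e3
        simp only [Pi.add_apply, Pi.smul_apply, smul_eq_mul, Pi.zero_apply] at *
        rw [e1, e2, e3, condExp_const (F.le i)]
        simp
      filter_upwards [hmono, hlin] with ω e1 e2
      rw [← e2]; exact e1
    filter_upwards [hpull, hone] with ω e1 e2
    rw [e1]
    simp only [Pi.mul_apply]
    nlinarith [hSnn i ω]
  -- Doob maximal inequality
  set ε : NNReal := (Real.exp (l*c)).toNNReal with hε
  have hεc : (ε : ℝ) = Real.exp (l*c) := Real.coe_toNNReal _ (Real.exp_pos _).le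
  have hnn : 0 ≤ S := fun k => fun ω => hSnn k ω
  have hmax := maximal_ineq hsub hnn (ε := ε) n
  have hincl : {ω | ∃ k, 1 ≤ k ∧ k ≤ n ∧ c ≤ X k ω - X 0 ω} ⊆
      {ω | (ε:ℝ) ≤ (Finset.range (n+1)).sup' Finset.nonempty_range_add_one fun k => S k ω} := by
    rintro ω ⟨k, _hk1, hkn, hc⟩
    have hmem : k ∈ Finset.range (n+1) := Finset.mem_range.2 (Nat.lt_succ_of_le hkn)
    refine Set.mem_setOf.2 (le_trans ?_ (Finset.le_sup' (fun k => S k ω) hmem))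
    rw [hεc]
    exact Real.exp_le_exp.2 (mul_le_mul_of_nonneg_left hc hl)
  have hsetint : ENNReal.ofReal (∫ ω in
      {ω | (ε:ℝ) ≤ (Finset.range (n+1)).sup' Finset.nonempty_range_add_one fun k => S k ω},
      S n ω ∂μ) ≤ ENNReal.ofReal (M^n) := by
    apply ENNReal.ofReal_le_ofReal
    exact le_trans (setIntegral_le_integral (hSint n)
      (Filter.Eventually.of_forall (fun ω => hSnn n ω))) (intS n)
  have hεne : (ε : ℝ≥0∞) ≠ 0 := by
    simp only [ne_eq, ENNReal.coe_eq_zero]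
    exact (Real.toNNReal_pos.2 (Real.exp_pos _)).ne'
  have hfin : μ {ω | (ε:ℝ) ≤ (Finset.range (n+1)).sup' Finset.nonempty_range_add_one fun k => S k ω}
      ≤ ENNReal.ofReal (M^n) / (ε : ℝ≥0∞) := by
    rw [ENNReal.le_div_iff_mul_le (Or.inl hεne) (Or.inl ENNReal.coe_ne_top), mul_comm]
    calc (ε : ℝ≥0∞) * μ _ = ε • μ _ := rfl
      _ ≤ _ := le_trans hmax hsetint
  refine le_trans (measure_mono hincl) (le_trans hfin ?_)
  have : (ε : ℝ≥0∞) = ENNReal.ofReal (Real.exp (l*c)) := by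
    rw [hε]; rfl
  rw [this, ← ENNReal.ofReal_div_of_pos (Real.exp_pos _)]
  apply ENNReal.ofReal_le_ofReal
  rw [div_eq_mul_inv, ← Real.exp_neg]

end Aux

/-- Theorem 2 (McDiarmid): exponential bound for martingales with bounded jumps and
bounded conditional variance, without the conditional symmetry assumption. -/
theorem martingale_bounded_jumps_divergence_bound
    {Ω : Type*} {m0 : MeasurableSpace Ω} {μ : Measure Ω} [IsProbabilityMeasure μ]
    {F : Filtration ℕ m0} {X : ℕ → Ω → ℝ}
    (hmart : Martingale X F μ)
    {d σ : ℝ} (hd : 0 < d) (hσ : 0 < σ)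
    (hbdd : ∀ k : ℕ, 1 ≤ k → ∀ᵐ ω ∂μ, |X k ω - X (k - 1) ω| ≤ d)
    (hvar : ∀ k : ℕ, 1 ≤ k → ∀ᵐ ω ∂μ,
      (μ[fun ω => (X k ω - X (k - 1) ω) ^ 2 | F (k - 1)]) ω ≤ σ ^ 2)
    {α : ℝ} (hα : 0 ≤ α) (hδ : α / d ≤ 1) (n : ℕ) (hn : 1 ≤ n) :
    μ {ω | ∃ k, 1 ≤ k ∧ k ≤ n ∧ α * n ≤ |X k ω - X 0 ω|}
      ≤ ENNReal.ofReal (2 * Real.exp (-(n : ℝ) *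
          klBer ((α / d + σ ^ 2 / d ^ 2) / (1 + σ ^ 2 / d ^ 2))
            ((σ ^ 2 / d ^ 2) / (1 + σ ^ 2 / d ^ 2)))) := by
  set γ : ℝ := σ^2/d^2 with hγdef
  have hγ : 0 < γ := by positivity
  have hγσ : σ^2 = γ * d^2 := by rw [hγdef]; field_simp
  have h1γ : (0:ℝ) < 1 + γ := by linarith
  set δ : ℝ := α/d with hδdef
  have hδ0 : 0 ≤ δ := by positivity
  have hαδ : α = δ * d := by rw [hδdef]; field_simp
  -- the negated martingale satisfies the same hypotheses
  have hmartN : Martingale (-X) F μ := hmart.neg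
  have hbddN : ∀ k : ℕ, 1 ≤ k → ∀ᵐ ω ∂μ, |(-X) k ω - (-X) (k - 1) ω| ≤ d := by
    intro k hk
    filter_upwards [hbdd k hk] with ω h
    simpa [Pi.neg_apply, abs_sub_comm, ← neg_add', abs_neg] using
      (by rw [show (-X) k ω - (-X) (k-1) ω = -(X k ω - X (k-1) ω) by
            simp [Pi.neg_apply]; ring, abs_neg]; exact h :
        |(-X) k ω - (-X) (k-1) ω| ≤ d)
  have hvarN : ∀ k : ℕ, 1 ≤ k → ∀ᵐ ω ∂μ,
      (μ[fun ω => ((-X) k ω - (-X) (k - 1) ω) ^ 2 | F (k - 1)]) ω ≤ σ ^ 2 := by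
    intro k hk
    have heq : (fun ω => ((-X) k ω - (-X) (k - 1) ω) ^ 2)
        = (fun ω => (X k ω - X (k - 1) ω) ^ 2) := by
      funext ω; simp [Pi.neg_apply]; ring
    rw [heq]
    exact hvar k hk
  -- two-sided bound for every nonnegative l
  have twoside : ∀ l : ℝ, 0 ≤ l →
      μ {ω | ∃ k, 1 ≤ k ∧ k ≤ n ∧ α * n ≤ |X k ω - X 0 ω|} ≤
      ENNReal.ofReal (2 * ((γ/(1+γ) * Real.exp (l*d) + 1/(1+γ) * Real.exp (-(l*γ*d)))^n
        * Real.exp (-(l*(α*n))))) := by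
    intro l hl
    have hA := onesided hmart hd hγ hγσ hbdd hvar hl (α*n) n
    have hB := onesided hmartN hd hγ hγσ hbddN hvarN hl (α*n) n
    have hincl : {ω | ∃ k, 1 ≤ k ∧ k ≤ n ∧ α * n ≤ |X k ω - X 0 ω|} ⊆
        {ω | ∃ k, 1 ≤ k ∧ k ≤ n ∧ α * n ≤ X k ω - X 0 ω} ∪
        {ω | ∃ k, 1 ≤ k ∧ k ≤ n ∧ α * n ≤ (-X) k ω - (-X) 0 ω} := by
      rintro ω ⟨k, hk1, hkn, hc⟩
      rcases le_abs.1 hc with h | h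
      · exact Or.inl ⟨k, hk1, hkn, h⟩
      · refine Or.inr ⟨k, hk1, hkn, ?_⟩
        simpa [Pi.neg_apply] using (by linarith : α * n ≤ -(X k ω) - -(X 0 ω))
    calc μ {ω | ∃ k, 1 ≤ k ∧ k ≤ n ∧ α * n ≤ |X k ω - X 0 ω|}
        ≤ μ ({ω | ∃ k, 1 ≤ k ∧ k ≤ n ∧ α * n ≤ X k ω - X 0 ω} ∪
          {ω | ∃ k, 1 ≤ k ∧ k ≤ n ∧ α * n ≤ (-X) k ω - (-X) 0 ω}) := measure_mono hincl
      _ ≤ μ {ω | ∃ k, 1 ≤ k ∧ k ≤ n ∧ α * n ≤ X k ω - X 0 ω} +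
          μ {ω | ∃ k, 1 ≤ k ∧ k ≤ n ∧ α * n ≤ (-X) k ω - (-X) 0 ω} := measure_union_le _ _
      _ ≤ ENNReal.ofReal ((γ/(1+γ) * Real.exp (l*d) + 1/(1+γ) * Real.exp (-(l*γ*d)))^n
            * Real.exp (-(l*(α*n)))) +
          ENNReal.ofReal ((γ/(1+γ) * Real.exp (l*d) + 1/(1+γ) * Real.exp (-(l*γ*d)))^n
            * Real.exp (-(l*(α*n)))) := add_le_add hA hB
      _ = _ := by
          rw [← ENNReal.ofReal_add (by positivity) (by positivity)]
          congr 1; ring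
  -- main case split
  rcases lt_or_eq_of_le hδ with hδ1 | hδ1
  · -- δ < 1 : use the optimal l
    have h1δ : (0:ℝ) < 1 - δ := by linarith
    have hδγ : (0:ℝ) < δ + γ := by linarith
    set s : ℝ := (δ+γ)/(γ*(1-δ)) with hsdef
    have hspos : 0 < s := by positivity
    have hs1 : 1 ≤ s := by
      rw [hsdef, le_div_iff₀ (by positivity)]
      nlinarith
    set t : ℝ := Real.log s / (1+γ) with htdef
    have ht0 : 0 ≤ t := by
      have := Real.log_nonneg hs1
      positivity
    set l : ℝ := t/d with hldef
    have hl0 : 0 ≤ l := by positivity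
    have hld : l*d = t := by rw [hldef]; field_simp
    have hlα : l*α = δ*t := by rw [hldef, hαδ]; field_simp
    have hst : Real.exp ((1+γ)*t) = s := by
      rw [htdef, show (1+γ)*(Real.log s/(1+γ)) = Real.log s by field_simp]
      exact Real.exp_log hspos
    set M : ℝ := γ/(1+γ) * Real.exp (l*d) + 1/(1+γ) * Real.exp (-(l*γ*d)) with hMdef
    have hMeq : M = Real.exp (-(γ*t)) / (1-δ) := by
      rw [hMdef, hld, show -(l*γ*d) = -(γ*(l*d)) by ring, hld]
      have e1 : Real.exp t = Real.exp (-(γ*t)) * s := by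
        rw [← hst, ← Real.exp_add]; congr 1; ring
      rw [e1, hsdef]
      field_simp
      ring
    have hM0 : 0 < M := by rw [hMeq]; positivity
    have hlogM : Real.log M = -(γ*t) - Real.log (1-δ) := by
      rw [hMeq, Real.log_div (Real.exp_pos _).ne' h1δ.ne', Real.log_exp]
    -- identify the divergence
    have hlogs : Real.log s = Real.log (δ+γ) - Real.log γ - Real.log (1-δ) := by
      rw [hsdef, Real.log_div hδγ.ne' (by positivity), Real.log_mul hγ.ne' h1δ.ne']
      ring
    have hkl : klBer ((δ + γ) / (1 + γ)) (γ / (1 + γ))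
        = (δ+γ)/(1+γ) * (Real.log (δ+γ) - Real.log γ)
          + (1-δ)/(1+γ) * Real.log (1-δ) := by
      rw [klBer]
      have e1 : (δ+γ)/(1+γ) / (γ/(1+γ)) = (δ+γ)/γ := by
        rw [div_div_div_comm, div_self h1γ.ne', div_one]
      have e2 : 1 - (δ+γ)/(1+γ) = (1-δ)/(1+γ) := by field_simp; ring
      have e3 : 1 - γ/(1+γ) = 1/(1+γ) := by field_simp; ring
      rw [e1, e2, e3, Real.log_div hδγ.ne' hγ.ne',
        show (1-δ)/(1+γ) / (1/(1+γ)) = 1-δ by field_simp]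
    have hkey : Real.log M - l*α = -klBer ((δ + γ) / (1 + γ)) (γ / (1 + γ)) := by
      rw [hlogM, hlα, hkl, htdef, hlogs]
      field_simp
      ring
    -- convert the bound
    refine le_trans (twoside l hl0) (ENNReal.ofReal_le_ofReal (le_of_eq ?_))
    have hMn : M^n * Real.exp (-(l*(α*n))) =
        Real.exp ((n:ℝ) * (Real.log M - l*α)) := by
      rw [show (n:ℝ) * (Real.log M - l*α) = (n:ℝ)*Real.log M + (-(l*(α*↑n))) by ring,
        Real.exp_add, Real.exp_nat_mul, Real.exp_log hM0]
    rw [hMn, hkey]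
    congr 1
    congr 1
    ring
  · -- δ = 1 : take l → ∞
    have hαd : α = d := by rw [hαδ, hδ1, one_mul]
    set q : ℝ := γ/(1+γ) with hqdef
    have hq0 : 0 < q := by positivity
    have htarget : ENNReal.ofReal (2 * Real.exp (-(n:ℝ) *
        klBer ((δ + γ) / (1 + γ)) (γ / (1 + γ)))) = ENNReal.ofReal (2 * q^n) := by
      rw [hδ1, div_self h1γ.ne']
      congr 2
      have hkl1 : klBer 1 q = -Real.log q := by
        rw [klBer]; norm_num
      rw [hkl1, show -(n:ℝ) * -Real.log q = (n:ℝ) * Real.log q by ring,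
        Real.exp_nat_mul, Real.exp_log hq0]
    rw [htarget]
    have hg : (fun l : ℝ => 2 * ((q * Real.exp (l*d) + 1/(1+γ) * Real.exp (-(l*γ*d)))^n
        * Real.exp (-(l*(α*(n:ℝ))))))
        = fun l : ℝ => 2 * (q + 1/(1+γ) * Real.exp (-(l*(1+γ)*d)))^n := by
      funext l
      have e1 : Real.exp (-(l*(α*(n:ℝ)))) = Real.exp (-(l*d))^n := by
        rw [← Real.exp_nat_mul]; congr 1; rw [hαd]; ring
      rw [e1, ← mul_pow]
      congr 2
      have e2 : Real.exp (l*d) * Real.exp (-(l*d)) = 1 := by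
        rw [← Real.exp_add]; simp
      have e3 : Real.exp (-(l*γ*d)) * Real.exp (-(l*d)) = Real.exp (-(l*(1+γ)*d)) := by
        rw [← Real.exp_add]; congr 1; ring
      calc (q * Real.exp (l*d) + 1/(1+γ) * Real.exp (-(l*γ*d))) * Real.exp (-(l*d))
          = q * (Real.exp (l*d) * Real.exp (-(l*d)))
            + 1/(1+γ) * (Real.exp (-(l*γ*d)) * Real.exp (-(l*d))) := by ring
        _ = q + 1/(1+γ) * Real.exp (-(l*(1+γ)*d)) := by rw [e2, e3]; ring
    have hexp0 : Tendsto (fun l : ℝ => Real.exp (-(l*(1+γ)*d))) atTop (nhds 0) := by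
      have h1 : Tendsto (fun l : ℝ => l * ((1+γ)*d)) atTop atTop :=
        tendsto_id.atTop_mul_const (by positivity)
      have h2 : Tendsto (fun l : ℝ => -(l*(1+γ)*d)) atTop atBot := by
        refine Tendsto.congr (fun l => ?_) (tendsto_neg_atTop_atBot.comp h1)
        show -(l*((1+γ)*d)) = -(l*(1+γ)*d)
        ring
      exact Real.tendsto_exp_atBot.comp h2
    have htd_real : Tendsto (fun l : ℝ => 2 * ((q * Real.exp (l*d)
        + 1/(1+γ) * Real.exp (-(l*γ*d)))^n * Real.exp (-(l*(α*(n:ℝ))))))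
        atTop (nhds (2 * q^n)) := by
      rw [hg]
      have h3 : Tendsto (fun l : ℝ => 2 * (q + 1/(1+γ) * Real.exp (-(l*(1+γ)*d)))^n)
          atTop (nhds (2 * (q + 1/(1+γ) * 0)^n)) :=
        (((hexp0.const_mul (1/(1+γ))).const_add q).pow n).const_mul 2
      simpa using h3
    have htd : Tendsto (fun l : ℝ => ENNReal.ofReal (2 * ((q * Real.exp (l*d)
        + 1/(1+γ) * Real.exp (-(l*γ*d)))^n * Real.exp (-(l*(α*(n:ℝ)))))))
        atTop (nhds (ENNReal.ofReal (2 * q^n))) :=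
      (ENNReal.continuous_ofReal.tendsto _).comp htd_real
    refine ge_of_tendsto htd ?_
    filter_upwards [eventually_ge_atTop (0:ℝ)] with l hl
    exact twoside l hl
end

section
/- Let {X_k, F_k}_{k≥0} be a discrete-time real-valued conditionally symmetric supermartingale, and let η_k = X_k − E[X_k | F_{k−1}]. Assume that for some constants d, σ > 0, almost surely η_k ≤ d and E[η_k² | F_{k−1}] ≤ σ² for every k ≥ 1. Set γ = σ²/d² and δ = α/d. Then for every α ≥ 0 with δ ∈ [0,1) and every n ≥ 1, P( max_{1≤k≤n} (X_k − X_0) ≥ αn ) ≤ exp(−n E(γ,δ)). -/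
open MeasureTheory ProbabilityTheory Filter Set

private lemma cosh_sq_bound' {d u : ℝ} (hd : 0 < d) (hu : |u| ≤ d) :
    Real.cosh u ≤ 1 + u ^ 2 / d ^ 2 * (Real.cosh d - 1) := by
  have hu2 : u ^ 2 ≤ d ^ 2 := by
    have := abs_le.1 hu
    nlinarith [this.1, this.2]
  have hd2 : (0:ℝ) < d ^ 2 := by positivity
  have key : ∀ n : ℕ, u ^ (2 * (n + 1)) / ((2 * (n + 1)).factorial : ℝ)
      ≤ u ^ 2 / d ^ 2 * (d ^ (2 * (n + 1)) / ((2 * (n + 1)).factorial : ℝ)) := by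
    intro n
    have hfac : (0:ℝ) < ((2 * (n + 1)).factorial : ℝ) := by positivity
    have h1 : u ^ 2 / d ^ 2 * (d ^ (2 * (n + 1)) / ((2 * (n + 1)).factorial : ℝ))
        = u ^ 2 * (d ^ 2) ^ n / ((2 * (n + 1)).factorial : ℝ) := by
      field_simp
      ring
    have h2 : u ^ (2 * (n + 1)) = u ^ 2 * (u ^ 2) ^ n := by ring
    rw [h1, h2]
    have h3 : u ^ 2 * (u ^ 2) ^ n ≤ u ^ 2 * (d ^ 2) ^ n :=
      mul_le_mul_of_nonneg_left (pow_le_pow_left₀ (sq_nonneg u) hu2 n) (sq_nonneg u)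
    exact div_le_div_of_nonneg_right h3 hfac.le
  have shift : ∀ (r : ℝ), HasSum (fun n : ℕ => r ^ (2 * (n + 1)) / ((2 * (n + 1)).factorial : ℝ))
      (Real.cosh r - 1) := by
    intro r
    have h := Real.hasSum_cosh r
    rw [← hasSum_nat_add_iff' 1] at h
    simpa using h
  have hle := hasSum_le key (shift u) ((shift d).mul_left (u ^ 2 / d ^ 2))
  have hnn : 0 ≤ u ^ 2 / d ^ 2 := by positivity
  nlinarith [hle]

private lemma cosh_mul_sq_bound {d u lam : ℝ} (hd : 0 < d) (hlam : 0 ≤ lam) (hu : |u| ≤ d) :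
    Real.cosh (lam * u) ≤ 1 + (Real.cosh (lam * d) - 1) / d ^ 2 * u ^ 2 := by
  rcases eq_or_lt_of_le hlam with h | h
  · simp [← h]
  · have hld : 0 < lam * d := mul_pos h hd
    have habs : |lam * u| ≤ lam * d := by
      rw [abs_mul, abs_of_pos h]
      exact mul_le_mul_of_nonneg_left hu h.le
    have key := cosh_sq_bound' hld habs
    have heq : (lam * u) ^ 2 / (lam * d) ^ 2 = u ^ 2 / d ^ 2 := by
      rw [mul_pow, mul_pow, mul_div_mul_left _ _ (pow_ne_zero 2 (ne_of_gt h))]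
    rw [heq] at key
    calc Real.cosh (lam * u) ≤ 1 + u ^ 2 / d ^ 2 * (Real.cosh (lam * d) - 1) := key
      _ = 1 + (Real.cosh (lam * d) - 1) / d ^ 2 * u ^ 2 := by ring

/-- Ville-type maximal inequality for nonnegative supermartingales with `M 0 = 1`. -/
private lemma ville_aux {Ω : Type*} {m0 : MeasurableSpace Ω} {μ : Measure Ω}
    [IsProbabilityMeasure μ]
    {F : Filtration ℕ m0} {M : ℕ → Ω → ℝ}
    (hM : Supermartingale M F μ) (hM0 : ∀ ω, M 0 ω = 1) (hMpos : ∀ k ω, 0 ≤ M k ω)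
    {c : ℝ} (hc : 0 < c) (n : ℕ) :
    μ {ω | ∃ k, 1 ≤ k ∧ k ≤ n ∧ c ≤ M k ω} ≤ ENNReal.ofReal (1 / c) := by
  set A := {ω | ∃ k, 1 ≤ k ∧ k ≤ n ∧ c ≤ M k ω} with hA_def
  set τ := fun ω => ((hittingBtwn M (Set.Ici c) 0 n ω : ℕ) : WithTop ℕ) with hτ_def
  have hτ : IsStoppingTime F τ :=
    Adapted.isStoppingTime_hittingBtwn hM.stronglyAdapted.adapted measurableSet_Ici
  have hτ_le : ∀ ω, τ ω ≤ n := fun ω => WithTop.coe_le_coe.2 (hittingBtwn_le ω)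
  have hsub := hM.neg
  have h0 : IsStoppingTime F (fun _ => ((0:ℕ) : WithTop ℕ)) := isStoppingTime_const F 0
  have hmono := hsub.expected_stoppedValue_mono h0 hτ
    (fun ω => WithTop.coe_le_coe.2 (Nat.zero_le _)) hτ_le
  have hsv_neg : stoppedValue (-M) τ = -stoppedValue M τ := rfl
  have hsv0 : stoppedValue (-M) (fun _ => ((0:ℕ) : WithTop ℕ)) = -(M 0) := stoppedValue_const (-M) 0
  rw [hsv_neg, hsv0] at hmono
  simp only [Pi.neg_apply, integral_neg, neg_le_neg_iff] at hmono
  have hint1 : ∫ ω, M 0 ω ∂μ = 1 := by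
    have : (M 0) = fun _ => (1:ℝ) := funext hM0
    rw [this]; simp
  have hsv_int : Integrable (stoppedValue M τ) μ := by
    have h := hsub.integrable_stoppedValue hτ hτ_le
    rw [hsv_neg] at h
    exact (integrable_neg_iff).1 h
  have hsv_le_one : ∫ ω, stoppedValue M τ ω ∂μ ≤ 1 := by
    rw [← hint1]; exact hmono
  have hA_meas : MeasurableSet A := by
    have : A = ⋃ k ∈ Set.Icc 1 n, {ω | c ≤ M k ω} := by
      ext ω; simp [hA_def, Set.mem_Icc, and_assoc]
    rw [this]
    refine MeasurableSet.biUnion (Set.to_countable _) fun k _ => ?_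
    exact measurableSet_le measurable_const
      ((hM.stronglyMeasurable k).mono (F.le k)).measurable
  have hbound : ∀ ω ∈ A, c ≤ stoppedValue M τ ω := by
    rintro ω ⟨k, hk1, hk2, hk3⟩
    exact stoppedValue_hittingBtwn_mem ⟨k, ⟨Nat.zero_le _, hk2⟩, hk3⟩
  have hmarkov : c * (μ A).toReal ≤ ∫ ω, stoppedValue M τ ω ∂μ := by
    refine (le_of_eq (by rw [smul_eq_mul, mul_comm]; rfl)).trans
      ((setIntegral_ge_of_const_le hA_meas (measure_ne_top μ A) hbound
      hsv_int.integrableOn).trans ?_)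
    exact setIntegral_le_integral hsv_int
      (Filter.Eventually.of_forall fun ω => hMpos _ ω)
  have hfin : (μ A).toReal ≤ 1 / c := by
    rw [le_div_iff₀ hc, mul_comm]
    exact hmarkov.trans hsv_le_one
  calc μ A = ENNReal.ofReal (μ A).toReal := (ENNReal.ofReal_toReal (measure_ne_top μ A)).symm
    _ ≤ ENNReal.ofReal (1 / c) := ENNReal.ofReal_le_ofReal hfin

/-- One-step conditional mgf bound for a conditionally symmetric increment. -/
private lemma step_bound {Ω : Type*} {m0 : MeasurableSpace Ω} {μ : Measure Ω}
    [IsProbabilityMeasure μ]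
    {m : MeasurableSpace Ω} (hm : m ≤ m0) (η : Ω → ℝ) (hη_meas : Measurable[m0] η)
    {d σ lam : ℝ} (hd : 0 < d) (hσ : 0 < σ) (hlam : 0 ≤ lam)
    (hsymm : ∀ g : ℝ → ℝ, Measurable g →
      μ[fun ω => g (η ω)|m] =ᵐ[μ] μ[fun ω => g (-η ω)|m])
    (hbdd : ∀ᵐ ω ∂μ, η ω ≤ d)
    (hvar : ∀ᵐ ω ∂μ, (μ[fun ω => η ω ^ 2|m]) ω ≤ σ ^ 2) :
    μ[fun ω => Real.exp (lam * η ω)|m]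
      ≤ᵐ[μ] fun _ => 1 + σ ^ 2 / d ^ 2 * (Real.cosh (lam * d) - 1) := by
  have habs : ∀ᵐ ω ∂μ, |η ω| ≤ d := by
    set g : ℝ → ℝ := (Set.Ioi d).indicator (fun _ => 1) with hg_def
    have hg : Measurable g := measurable_const.indicator measurableSet_Ioi
    have hg01 : ∀ t, 0 ≤ g t ∧ g t ≤ 1 := by
      intro t
      rw [hg_def]
      unfold Set.indicator
      split <;> norm_num
    have h1 := hsymm g hg
    have hgn_int : Integrable (fun ω => g (-η ω)) μ := by
      refine Integrable.mono' (integrable_const 1)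
        (Measurable.aestronglyMeasurable (hg.comp hη_meas.neg)) ?_
      refine Eventually.of_forall fun ω => ?_
      rw [Real.norm_eq_abs, abs_of_nonneg (hg01 _).1]
      exact (hg01 _).2
    have hzero : (fun ω => g (η ω)) =ᵐ[μ] 0 := by
      filter_upwards [hbdd] with ω hω
      simp only [Pi.zero_apply, hg_def]
      exact Set.indicator_of_notMem (by simpa using hω) _
    have hI : ∫ ω, g (-η ω) ∂μ = 0 := by
      rw [← integral_condExp hm (f := fun ω => g (-η ω)), integral_congr_ae h1.symm,
        integral_condExp hm, integral_congr_ae hzero]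
      simp
    have hzero' : (fun ω => g (-η ω)) =ᵐ[μ] 0 :=
      (integral_eq_zero_iff_of_nonneg (fun ω => (hg01 _).1) hgn_int).1 hI
    filter_upwards [hbdd, hzero'] with ω h1' h2'
    rw [abs_le]
    refine ⟨?_, h1'⟩
    by_contra h
    push_neg at h
    have hmem : -η ω ∈ Set.Ioi d := by simp only [Set.mem_Ioi]; linarith
    have : g (-η ω) = 1 := Set.indicator_of_mem hmem _
    rw [h2'] at this
    norm_num at this
  have hη2d : ∀ᵐ ω ∂μ, η ω ^ 2 ≤ d ^ 2 := by
    filter_upwards [habs] with ω h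
    calc η ω ^ 2 = |η ω| ^ 2 := (sq_abs _).symm
      _ ≤ d ^ 2 := pow_le_pow_left₀ (abs_nonneg _) h 2
  have hη2_int : Integrable (fun ω => η ω ^ 2) μ := by
    refine Integrable.mono' (integrable_const (d ^ 2))
      (Measurable.aestronglyMeasurable (hη_meas.pow_const 2)) ?_
    filter_upwards [hη2d] with ω h
    rwa [Real.norm_eq_abs, abs_of_nonneg (sq_nonneg _)]
  have hcosh_int : Integrable (fun ω => Real.cosh (lam * η ω)) μ := by
    refine Integrable.mono' (integrable_const (Real.cosh (lam * d)))
      (Measurable.aestronglyMeasurable (Real.measurable_cosh.comp (hη_meas.const_mul lam))) ?_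
    filter_upwards [habs] with ω h
    rw [Real.norm_eq_abs, abs_of_pos (Real.cosh_pos _)]
    refine Real.cosh_le_cosh.2 ?_
    calc |lam * η ω| = lam * |η ω| := by rw [abs_mul, abs_of_nonneg hlam]
      _ ≤ lam * d := mul_le_mul_of_nonneg_left h hlam
      _ = |lam * d| := (abs_of_nonneg (mul_nonneg hlam hd.le)).symm
  have hsinh_int : Integrable (fun ω => Real.sinh (lam * η ω)) μ := by
    refine Integrable.mono' (integrable_const (Real.sinh (lam * d)))
      (Measurable.aestronglyMeasurable (Real.measurable_sinh.comp (hη_meas.const_mul lam))) ?_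
    filter_upwards [habs] with ω h
    rw [Real.norm_eq_abs, Real.abs_sinh]
    refine Real.sinh_le_sinh.2 ?_
    calc |lam * η ω| = lam * |η ω| := by rw [abs_mul, abs_of_nonneg hlam]
      _ ≤ lam * d := mul_le_mul_of_nonneg_left h hlam
  have hsinh0 : μ[fun ω => Real.sinh (lam * η ω)|m] =ᵐ[μ] 0 := by
    have h2 := hsymm (fun u => Real.sinh (lam * u))
      (Real.measurable_sinh.comp (measurable_id.const_mul lam))
    have h3 : (fun ω => Real.sinh (lam * -η ω)) = -(fun ω => Real.sinh (lam * η ω)) := by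
      funext ω; simp [mul_neg, Real.sinh_neg]
    rw [show (fun ω => Real.sinh (lam * -η ω)) = -(fun ω => Real.sinh (lam * η ω)) from h3] at h2
    have h4 := condExp_neg (μ := μ) (m := m) (fun ω => Real.sinh (lam * η ω))
    have h5 := h2.trans h4
    filter_upwards [h5] with ω hω
    simp only [Pi.neg_apply] at hω
    simp only [Pi.zero_apply]
    linarith
  set c₀ : ℝ := (Real.cosh (lam * d) - 1) / d ^ 2 with hc₀
  have hc₀0 : 0 ≤ c₀ := div_nonneg (by linarith [Real.one_le_cosh (lam * d)]) (by positivity)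
  have hcosh_bd : (fun ω => Real.cosh (lam * η ω)) ≤ᵐ[μ] fun ω => 1 + c₀ * η ω ^ 2 := by
    filter_upwards [habs] with ω h
    exact cosh_mul_sq_bound hd hlam h
  have hconst_int : Integrable (fun ω => 1 + c₀ * η ω ^ 2) μ :=
    (integrable_const (1:ℝ)).add (hη2_int.const_mul c₀)
  have hmono1 := condExp_mono (m := m) hcosh_int hconst_int hcosh_bd
  have heval : μ[fun ω => 1 + c₀ * η ω ^ 2|m] ≤ᵐ[μ] fun _ => 1 + c₀ * σ ^ 2 := by
    have e1 : (fun ω => 1 + c₀ * η ω ^ 2) = (fun _ : Ω => (1:ℝ)) + (c₀ • fun ω => η ω ^ 2) := by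
      funext ω; simp [smul_eq_mul]
    rw [e1]
    have hadd1 := condExp_add (μ := μ) (m := m) (integrable_const (1:ℝ)) ((hη2_int).smul c₀)
    have hsmul := condExp_smul (μ := μ) (m := m) c₀ (fun ω => η ω ^ 2)
    have hconst : μ[(fun _ : Ω => (1:ℝ))|m] = fun _ => (1:ℝ) := condExp_const hm 1
    filter_upwards [hadd1, hsmul, hvar] with ω h1 h2 h3
    rw [h1]
    simp only [Pi.add_apply, hconst, Pi.smul_apply, smul_eq_mul] at h2 ⊢
    rw [h2]
    have := mul_le_mul_of_nonneg_left h3 hc₀0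
    linarith
  have hsplit : (fun ω => Real.exp (lam * η ω))
      = (fun ω => Real.cosh (lam * η ω)) + fun ω => Real.sinh (lam * η ω) := by
    funext ω; simp [Real.cosh_add_sinh]
  have hadd2 := condExp_add (μ := μ) (m := m) hcosh_int hsinh_int
  rw [hsplit]
  filter_upwards [hadd2, hsinh0, hmono1, heval] with ω h1 h2 h3 h4
  rw [h1]
  simp only [Pi.add_apply, Pi.zero_apply] at h2 ⊢
  rw [h2]
  have : (1:ℝ) + c₀ * σ ^ 2 = 1 + σ ^ 2 / d ^ 2 * (Real.cosh (lam * d) - 1) := by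
    rw [hc₀]; ring
  linarith [h3.trans h4]

/-- Corollary (supermartingale case): exponential bound for conditionally symmetric
supermartingales, where `η_k = X_k − E[X_k | F_{k−1}]`. -/
theorem conditionally_symmetric_supermartingale_bound
    {Ω : Type*} {m0 : MeasurableSpace Ω} {μ : Measure Ω} [IsProbabilityMeasure μ]
    {F : Filtration ℕ m0} {X : ℕ → Ω → ℝ}
    (hsuper : Supermartingale X F μ)
    (hsymm : ∀ k : ℕ, 1 ≤ k → ∀ g : ℝ → ℝ, Measurable g →
      μ[fun ω => g (X k ω - (μ[X k | F (k - 1)]) ω) | F (k - 1)]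
        =ᵐ[μ] μ[fun ω => g (-(X k ω - (μ[X k | F (k - 1)]) ω)) | F (k - 1)])
    {d σ : ℝ} (hd : 0 < d) (hσ : 0 < σ)
    (hbdd : ∀ k : ℕ, 1 ≤ k → ∀ᵐ ω ∂μ, X k ω - (μ[X k | F (k - 1)]) ω ≤ d)
    (hvar : ∀ k : ℕ, 1 ≤ k → ∀ᵐ ω ∂μ,
      (μ[fun ω => (X k ω - (μ[X k | F (k - 1)]) ω) ^ 2 | F (k - 1)]) ω ≤ σ ^ 2)
    {α : ℝ} (hα : 0 ≤ α) (hδ : α / d < 1) (n : ℕ) (hn : 1 ≤ n) :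
    μ {ω | ∃ k, 1 ≤ k ∧ k ≤ n ∧ α * n ≤ X k ω - X 0 ω}
      ≤ ENNReal.ofReal (Real.exp (-(n : ℝ) * Eexp (σ ^ 2 / d ^ 2) (α / d))) := by
  have hd2 : (0:ℝ) < d ^ 2 := by positivity
  set γ : ℝ := σ ^ 2 / d ^ 2 with hγ_def
  set δ : ℝ := α / d with hδ_def
  have hγpos : 0 < γ := by rw [hγ_def]; positivity
  have hδ0 : 0 ≤ δ := div_nonneg hα hd.le
  have hδ1 : δ < 1 := hδ
  set x : ℝ := Real.log ((δ * (1 - γ) + Real.sqrt (δ ^ 2 * (1 - γ) ^ 2 + γ ^ 2 * (1 - δ ^ 2)))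
      / (γ * (1 - δ))) with hx_def
  have hden : 0 < γ * (1 - δ) := mul_pos hγpos (by linarith)
  have hsqrt_ge : γ * (1 - δ) - δ * (1 - γ)
      ≤ Real.sqrt (δ ^ 2 * (1 - γ) ^ 2 + γ ^ 2 * (1 - δ ^ 2)) := by
    rcases le_or_gt (γ * (1 - δ) - δ * (1 - γ)) 0 with h | h
    · exact h.trans (Real.sqrt_nonneg _)
    · rw [Real.le_sqrt' h]
      nlinarith [mul_nonneg (mul_nonneg hγpos.le hδ0) (sub_nonneg.2 hδ1.le)]
  have hratio : 1 ≤ (δ * (1 - γ) + Real.sqrt (δ ^ 2 * (1 - γ) ^ 2 + γ ^ 2 * (1 - δ ^ 2)))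
      / (γ * (1 - δ)) := by
    rw [le_div_iff₀ hden]; linarith
  have hx0 : 0 ≤ x := Real.log_nonneg hratio
  set lam : ℝ := x / d with hlam_def
  have hlam0 : 0 ≤ lam := div_nonneg hx0 hd.le
  have hlamd : lam * d = x := by rw [hlam_def]; field_simp
  set eB : ℝ := 1 + γ * (Real.cosh x - 1) with heB_def
  have heB1 : 1 ≤ eB := by
    have := Real.one_le_cosh x
    nlinarith
  have heBpos : 0 < eB := lt_of_lt_of_le one_pos heB1
  set B : ℝ := Real.log eB with hB_def
  have hB0 : 0 ≤ B := Real.log_nonneg heB1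
  have hexpB : Real.exp B = eB := Real.exp_log heBpos
  have hE_eq : Eexp γ δ = δ * x - B := rfl
  set M : ℕ → Ω → ℝ := fun k ω => Real.exp (lam * (X k ω - X 0 ω) - k * B) with hM_def
  have hXsm : ∀ k, StronglyMeasurable[m0] (X k) :=
    fun k => (hsuper.stronglyMeasurable k).mono (F.le k)
  have hstep : ∀ i : ℕ, ∀ᵐ ω ∂μ, X (i + 1) ω - X i ω ≤ d := by
    intro i
    have h1 := hbdd (i + 1) (Nat.le_add_left 1 i)
    simp only [Nat.add_sub_cancel] at h1
    filter_upwards [h1, hsuper.condExp_ae_le (Nat.le_succ i)] with ω hω1 hω2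
    have : (μ[X (i+1)|F i]) ω ≤ X i ω := hω2
    linarith
  have hbd : ∀ k : ℕ, ∀ᵐ ω ∂μ, X k ω - X 0 ω ≤ k * d := by
    intro k
    induction k with
    | zero => simp
    | succ i ih =>
      filter_upwards [ih, hstep i] with ω h1 h2
      push_cast
      linarith
  have hMadp : StronglyAdapted F M := by
    intro k
    exact Real.continuous_exp.comp_stronglyMeasurable
      ((((hsuper.stronglyAdapted k).sub ((hsuper.stronglyAdapted 0).mono
        (F.mono (Nat.zero_le k)))).const_mul lam).sub stronglyMeasurable_const)
  have hMint : ∀ k, Integrable (M k) μ := by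
    intro k
    refine Integrable.mono' (integrable_const (Real.exp (lam * (k * d))))
      (Measurable.aestronglyMeasurable ?_) ?_
    · exact Real.measurable_exp.comp
        ((((hXsm k).measurable.sub (hXsm 0).measurable).const_mul lam).sub measurable_const)
    · filter_upwards [hbd k] with ω h
      rw [Real.norm_eq_abs, abs_of_pos (Real.exp_pos _), Real.exp_le_exp]
      have h1 : lam * (X k ω - X 0 ω) ≤ lam * (k * d) := mul_le_mul_of_nonneg_left h hlam0
      have h2 : 0 ≤ (k:ℝ) * B := mul_nonneg (Nat.cast_nonneg k) hB0
      linarith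
  have hcond : ∀ i : ℕ, μ[M (i + 1)|F i] ≤ᵐ[μ] M i := by
    intro i
    have h1le : 1 ≤ i + 1 := Nat.le_add_left 1 i
    have hb' := hbdd (i + 1) h1le
    have hv' := hvar (i + 1) h1le
    have hs' := hsymm (i + 1) h1le
    simp only [Nat.add_sub_cancel] at hb' hv' hs'
    have hη_meas : Measurable[m0] fun ω => X (i+1) ω - (μ[X (i+1)|F i]) ω :=
      (hXsm (i+1)).measurable.sub ((stronglyMeasurable_condExp.mono (F.le i)).measurable)
    have hkey := step_bound (F.le i) (fun ω => X (i+1) ω - (μ[X (i+1)|F i]) ω)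
      hη_meas hd hσ hlam0 hs' hb' hv'
    rw [hlamd] at hkey
    have hV_meas : Measurable[m0] fun ω => Real.exp (lam * (X (i+1) ω - X i ω)) :=
      Real.measurable_exp.comp (((hXsm (i+1)).measurable.sub (hXsm i).measurable).const_mul lam)
    have hV_int : Integrable (fun ω => Real.exp (lam * (X (i+1) ω - X i ω))) μ := by
      refine Integrable.mono' (integrable_const (Real.exp (lam * d)))
        (Measurable.aestronglyMeasurable hV_meas) ?_
      filter_upwards [hstep i] with ω h
      rw [Real.norm_eq_abs, abs_of_pos (Real.exp_pos _), Real.exp_le_exp]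
      exact mul_le_mul_of_nonneg_left h hlam0
    have hV'_int : Integrable (fun ω => Real.exp (lam * (X (i+1) ω - (μ[X (i+1)|F i]) ω))) μ := by
      refine Integrable.mono' (integrable_const (Real.exp (lam * d)))
        (Measurable.aestronglyMeasurable (Real.measurable_exp.comp (hη_meas.const_mul lam))) ?_
      filter_upwards [hb'] with ω h
      rw [Real.norm_eq_abs, abs_of_pos (Real.exp_pos _), Real.exp_le_exp]
      exact mul_le_mul_of_nonneg_left h hlam0
    have hVle : (fun ω => Real.exp (lam * (X (i+1) ω - X i ω)))
        ≤ᵐ[μ] fun ω => Real.exp (lam * (X (i+1) ω - (μ[X (i+1)|F i]) ω)) := by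
      filter_upwards [hsuper.condExp_ae_le (Nat.le_succ i)] with ω h
      rw [Real.exp_le_exp]
      refine mul_le_mul_of_nonneg_left ?_ hlam0
      have : (μ[X (i+1)|F i]) ω ≤ X i ω := h
      linarith
    have hVce := condExp_mono (m := F i) hV_int hV'_int hVle
    have hW_int : Integrable (fun ω => Real.exp (lam * (X (i+1) ω - X i ω) - B)) μ := by
      refine Integrable.mono' (integrable_const (Real.exp (lam * d)))
        (Measurable.aestronglyMeasurable (Real.measurable_exp.comp
          ((((hXsm (i+1)).measurable.sub (hXsm i).measurable).const_mul lam).sub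
            measurable_const))) ?_
      filter_upwards [hstep i] with ω h
      rw [Real.norm_eq_abs, abs_of_pos (Real.exp_pos _), Real.exp_le_exp]
      have := mul_le_mul_of_nonneg_left h hlam0
      linarith
    have hW_eq : (fun ω => Real.exp (lam * (X (i+1) ω - X i ω) - B))
        = Real.exp (-B) • (fun ω => Real.exp (lam * (X (i+1) ω - X i ω))) := by
      funext ω
      simp only [Pi.smul_apply, smul_eq_mul, ← Real.exp_add]
      ring_nf
    have hWce : μ[fun ω => Real.exp (lam * (X (i+1) ω - X i ω) - B)|F i]
        ≤ᵐ[μ] fun _ => 1 := by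
      rw [hW_eq]
      have hsm := condExp_smul (μ := μ) (m := F i) (Real.exp (-B))
        (fun ω => Real.exp (lam * (X (i+1) ω - X i ω)))
      filter_upwards [hsm, hVce, hkey] with ω h1 h2 h3
      rw [h1]
      simp only [Pi.smul_apply, smul_eq_mul]
      have heq : (1:ℝ) + σ ^ 2 / d ^ 2 * (Real.cosh x - 1) = eB := by
        rw [heB_def, hγ_def]
      have h4 : (μ[fun ω => Real.exp (lam * (X (i+1) ω - X i ω))|F i]) ω ≤ eB :=
        h2.trans (h3.trans_eq heq)
      calc Real.exp (-B) * (μ[fun ω => Real.exp (lam * (X (i+1) ω - X i ω))|F i]) ω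
          ≤ Real.exp (-B) * eB := mul_le_mul_of_nonneg_left h4 (Real.exp_pos _).le
        _ = 1 := by rw [← hexpB, ← Real.exp_add]; simp
    have hMi_sm : StronglyMeasurable[F i] (M i) :=
      Real.continuous_exp.comp_stronglyMeasurable
        ((((hsuper.stronglyAdapted i).sub ((hsuper.stronglyAdapted 0).mono
          (F.mono (Nat.zero_le i)))).const_mul lam).sub stronglyMeasurable_const)
    have hM_split : M (i+1) = (M i) * fun ω => Real.exp (lam * (X (i+1) ω - X i ω) - B) := by
      funext ω
      simp only [hM_def, Pi.mul_apply, ← Real.exp_add]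
      congr 1
      push_cast
      ring
    have hmul := condExp_mul_of_stronglyMeasurable_left (m := F i) hMi_sm
      (by rw [← hM_split]; exact hMint (i+1)) hW_int
    rw [hM_split]
    filter_upwards [hmul, hWce] with ω h1 h2
    rw [h1]
    simp only [Pi.mul_apply]
    have hpos : 0 ≤ M i ω := (Real.exp_pos _).le
    have h2' : (μ[fun ω => Real.exp (lam * (X (i+1) ω - X i ω) - B)|F i]) ω ≤ 1 := h2
    calc M i ω * (μ[fun ω => Real.exp (lam * (X (i+1) ω - X i ω) - B)|F i]) ω
        ≤ M i ω * 1 := mul_le_mul_of_nonneg_left h2' hpos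
      _ = M i ω := mul_one _
  have hMsuper : Supermartingale M F μ := supermartingale_nat hMadp hMint hcond
  have hM0 : ∀ ω, M 0 ω = 1 := fun ω => by simp [hM_def]
  have hMpos : ∀ k ω, 0 ≤ M k ω := fun k ω => (Real.exp_pos _).le
  have hc : (0:ℝ) < Real.exp ((n:ℝ) * Eexp γ δ) := Real.exp_pos _
  have hville := ville_aux hMsuper hM0 hMpos hc n
  refine le_trans (measure_mono ?_) (le_trans hville ?_)
  · rintro ω ⟨k, h1, h2, h3⟩
    refine ⟨k, h1, h2, ?_⟩
    show Real.exp ((n:ℝ) * Eexp γ δ) ≤ Real.exp (lam * (X k ω - X 0 ω) - k * B)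
    rw [Real.exp_le_exp, hE_eq]
    have hk : (k:ℝ) ≤ n := Nat.cast_le.2 h2
    have h4 : lam * (α * n) ≤ lam * (X k ω - X 0 ω) := mul_le_mul_of_nonneg_left h3 hlam0
    have h5 : lam * (α * n) = δ * x * n := by
      rw [hlam_def, hδ_def]
      field_simp
    have h6 : (k:ℝ) * B ≤ n * B := mul_le_mul_of_nonneg_right hk hB0
    rw [h5] at h4
    linarith [h4, h6]
  · rw [one_div, ← Real.exp_neg]
    exact ENNReal.ofReal_le_ofReal (Real.exp_le_exp.2 (le_of_eq (by ring)))
end
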